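/- arXiv:1507.06148 — 5 statements merged into one kernel-verified Lean document; each statement's English description precedes it below -/
import Mathlib

section
/- Let p be an odd prime and let a_0,...,a_{p-1}, b_0,...,b_{p-1} be integers such that the sum of the a_i is congruent to the sum of the b_i modulo 2, and such that the sums ∑ a_i ζ_p^i and ∑ b_i ζ_p^i are equal, where ζ_p is a primitive p-th root of unity. Then a_i ≡ b_i (mod 2) for every i. -/
open Complex Polynomial

noncomputable def zp (p : ℕ) : ℂ := Complex.exp (2 * Real.pi * Complex.I / p)

theorem stmt_0 (p : ℕ) [Fact p.Prime] (hp2 : p ≠ 2)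
    (a b : Fin p → ℤ)
    (hpar : (∑ i, a i) ≡ (∑ i, b i) [ZMOD 2])
    (hsum : ∑ i, (a i : ℂ) * zp p ^ (i : ℕ) = ∑ i, (b i : ℂ) * zp p ^ (i : ℕ)) :
    ∀ i, a i ≡ b i [ZMOD 2] := by
  have hp : p.Prime := Fact.out
  have hp0 : (p : ℕ) ≠ 0 := hp.ne_zero
  have hprim : IsPrimitiveRoot (zp p) p := Complex.isPrimitiveRoot_exp p hp0
  set c : Fin p → ℤ := fun i => a i - b i with hc
  set f : ℕ → ℚ := fun n => if h : n < p then (c ⟨n, h⟩ : ℚ) else 0 with hf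
  set P : ℚ[X] := ∑ i ∈ Finset.range p, C (f i) * X ^ i with hP
  have hcoeff : ∀ j : Fin p, P.coeff (j : ℕ) = (c j : ℚ) := by
    intro j
    rw [hP, Polynomial.finset_sum_coeff]
    simp only [coeff_C_mul, coeff_X_pow]
    rw [Finset.sum_eq_single (j : ℕ)]
    · simp [hf, j.isLt]
    · intro i _ hij; simp [Ne.symm hij]
    · intro h; exact absurd (Finset.mem_range.mpr j.isLt) h
  have hsum0 : ∑ i : Fin p, (c i : ℂ) * zp p ^ (i : ℕ) = 0 := by
    simp only [hc, Int.cast_sub, sub_mul, Finset.sum_sub_distrib, hsum, sub_self]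
  have haeval : aeval (zp p) P = 0 := by
    rw [hP]
    simp only [map_sum, map_mul, aeval_C, aeval_X_pow]
    rw [← Fin.sum_univ_eq_sum_range (fun i => (algebraMap ℚ ℂ) (f i) * zp p ^ i) p, ← hsum0]
    refine Finset.sum_congr rfl fun i _ => ?_
    simp [hf, i.isLt]
  have hdvd : cyclotomic p ℚ ∣ P := by
    rw [cyclotomic_eq_minpoly_rat hprim hp.pos]
    exact minpoly.dvd ℚ _ haeval
  obtain ⟨q, hq⟩ := hdvd
  -- show all c i equal
  have hconst : ∀ i : Fin p, c i = c ⟨0, hp.pos⟩ := by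
    by_cases hP0 : P = 0
    · intro i
      have h1 := hcoeff i
      have h2 := hcoeff ⟨0, hp.pos⟩
      rw [hP0] at h1 h2
      simp only [coeff_zero] at h1 h2
      exact_mod_cast h1.symm.trans h2
    · have hq0 : q ≠ 0 := by rintro rfl; simp at hq; exact hP0 hq
      have hcy0 : cyclotomic p ℚ ≠ 0 := cyclotomic_ne_zero p ℚ
      have hdegP : P.natDegree ≤ p - 1 := by
        rw [hP]
        refine Polynomial.natDegree_sum_le_of_forall_le _ _ fun i hi => ?_
        calc (C (f i) * X ^ i).natDegree ≤ (X ^ i).natDegree :=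
              natDegree_C_mul_le (f i) (X ^ i)
          _ = i := natDegree_X_pow i
          _ ≤ p - 1 := Nat.le_sub_one_of_lt (Finset.mem_range.mp hi)
      have hdeg : P.natDegree = (p - 1) + q.natDegree := by
        rw [hq, natDegree_mul hcy0 hq0, natDegree_cyclotomic, Nat.totient_prime hp]
      have hqdeg : q.natDegree = 0 := by omega
      obtain ⟨r, hr⟩ : ∃ r, q = C r := ⟨q.coeff 0, eq_C_of_natDegree_eq_zero hqdeg⟩
      intro i
      have key : ∀ j : Fin p, (c j : ℚ) = r := by
        intro j
        rw [← hcoeff j, hq, hr, mul_comm, coeff_C_mul,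
          cyclotomic_prime ℚ p, Polynomial.finset_sum_coeff]
        simp only [coeff_X_pow]
        rw [Finset.sum_eq_single (j : ℕ)]
        · simp
        · intro i _ hij; simp [Ne.symm hij]
        · intro h; exact absurd (Finset.mem_range.mpr j.isLt) h
      have := (key i).trans (key ⟨0, hp.pos⟩).symm
      exact_mod_cast this
  -- parity
  have hdvd2 : (2 : ℤ) ∣ (p : ℤ) * c ⟨0, hp.pos⟩ := by
    have h1 : (2 : ℤ) ∣ ∑ i, c i := by
      have := hpar.dvd
      simpa only [hc, Finset.sum_sub_distrib, neg_sub] using (Int.dvd_neg.mpr this)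
    have h2 : ∑ i, c i = (p : ℤ) * c ⟨0, hp.pos⟩ := by
      rw [Finset.sum_congr rfl fun i _ => hconst i]
      simp [mul_comm]
    rwa [h2] at h1
  have hpodd : ¬ (2 : ℤ) ∣ (p : ℤ) := by
    have hodd : p % 2 = 1 := Nat.odd_iff.mp (hp.odd_of_ne_two hp2)
    intro h
    have : (2 : ℕ) ∣ p := by exact_mod_cast h
    omega
  have hc0 : (2 : ℤ) ∣ c ⟨0, hp.pos⟩ :=
    (Int.prime_two.dvd_mul.mp hdvd2).resolve_left hpodd
  intro i
  have h2 : (2 : ℤ) ∣ a i - b i := by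
    have := hconst i ▸ hc0
    simpa [hc] using this
  exact (Int.modEq_iff_dvd.mpr h2).symm
end

section
/- Let p be an odd prime, q = p^m with m even, and f: 𝔽_q → 𝔽_p a function such that ∑_{x ∈ 𝔽_q} ζ_p^{f(x)} = ε √(p*)^m with ε ∈ {1,-1}. Let N_f(a) = #{x ∈ 𝔽_q : f(x) = a}. Then N_f(0) = p^{m-1} + ε(p-1)(-1/p)^{m/2} p^{(m-2)/2}, and for each a ∈ 𝔽_p^×, N_f(a) = p^{m-1} - ε(-1/p)^{m/2} p^{(m-2)/2}. -/
open Complex Polynomial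

noncomputable def sqrtPstar (p : ℕ) : ℂ :=
  if p % 4 = 1 then (Real.sqrt p : ℂ) else (Real.sqrt p : ℂ) * Complex.I

lemma key (p : ℕ) [hfp : Fact p.Prime] (e : ZMod p → ℤ)
    (h : ∑ a : ZMod p, (e a : ℂ) * zp p ^ a.val = 0) :
    ∀ a b : ZMod p, e a = e b := by
  have hp : p.Prime := hfp.out
  have hprim : IsPrimitiveRoot (zp p) p := Complex.isPrimitiveRoot_exp p hp.ne_zero
  set P : ℚ[X] := ∑ a : ZMod p, C ((e a : ℚ)) * X ^ a.val with hP
  have hcoeff : ∀ b : ZMod p, P.coeff b.val = (e b : ℚ) := by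
    intro b
    rw [hP, finset_sum_coeff]
    rw [Finset.sum_eq_single b]
    · simp
    · intro a _ hab
      simp only [coeff_C_mul, coeff_X_pow]
      rw [if_neg (fun hv => hab (ZMod.val_injective p hv.symm)), mul_zero]
    · simp
  have haev : aeval (zp p) P = 0 := by
    rw [hP, map_sum]
    rw [← h]
    congr 1; ext a
    simp [mul_comm]
  have hdvd : cyclotomic p ℚ ∣ P := by
    rw [Polynomial.cyclotomic_eq_minpoly_rat hprim hp.pos]
    exact minpoly.dvd ℚ (zp p) haev
  rcases eq_or_ne P 0 with h0 | h0
  · intro a b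
    have ha := hcoeff a; have hb := hcoeff b
    rw [h0] at ha hb
    simp only [coeff_zero] at ha hb
    exact_mod_cast ha.symm.trans hb
  · obtain ⟨Q, hQ⟩ := hdvd
    have hdegP : P.natDegree ≤ p - 1 := by
      apply Polynomial.natDegree_sum_le_of_forall_le
      intro a _
      refine le_trans (Polynomial.natDegree_C_mul_le _ _) ?_
      simpa using Nat.le_sub_one_of_lt (ZMod.val_lt a)
    have hQ0 : Q ≠ 0 := by rintro rfl; simp [hQ] at h0
    have hcyc0 : cyclotomic p ℚ ≠ 0 := cyclotomic_ne_zero p ℚ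
    have hdeg : P.natDegree = (p - 1) + Q.natDegree := by
      rw [hQ, Polynomial.natDegree_mul hcyc0 hQ0, Polynomial.natDegree_cyclotomic,
        Nat.totient_prime hp]
    have hQdeg : Q.natDegree = 0 := by omega
    obtain ⟨c, rfl⟩ := Polynomial.natDegree_eq_zero.mp hQdeg
    have hcc : ∀ b : ZMod p, (e b : ℚ) = c := by
      intro b
      rw [← hcoeff b, hQ, Polynomial.coeff_mul_C, Polynomial.cyclotomic_prime,
        finset_sum_coeff]
      simp only [coeff_X_pow]
      rw [Finset.sum_ite_eq (Finset.range p) b.val (fun _ => (1 : ℚ))]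
      simp [ZMod.val_lt b]
    intro a b
    have := (hcc a).trans (hcc b).symm
    exact_mod_cast this

theorem stmt_5 (p m : ℕ) [Fact p.Prime] (hp2 : p ≠ 2) (hm : 2 ≤ m) (hme : Even m)
    (F : Type) [Field F] [Fintype F] [DecidableEq F]
    (hcard : Fintype.card F = p ^ m)
    (f : F → ZMod p) (ε : ℤ) (hε : ε = 1 ∨ ε = -1)
    (hsum : ∑ x : F, zp p ^ (f x).val = (ε : ℂ) * sqrtPstar p ^ m) :
    (((Finset.univ.filter fun x : F => f x = 0).card : ℤ)
      = (p : ℤ) ^ (m - 1) + ε * (p - 1) * (legendreSym p (-1)) ^ (m / 2) * (p : ℤ) ^ ((m - 2) / 2))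
    ∧ ∀ a : ZMod p, a ≠ 0 →
      (((Finset.univ.filter fun x : F => f x = a).card : ℤ)
        = (p : ℤ) ^ (m - 1) - ε * (legendreSym p (-1)) ^ (m / 2) * (p : ℤ) ^ ((m - 2) / 2)) := by
  have hp : p.Prime := Fact.out
  obtain ⟨j, hj⟩ : ∃ j, m = 2 * j + 2 := by
    obtain ⟨r, hr⟩ := hme; exact ⟨r - 1, by omega⟩
  set L : ℤ := legendreSym p (-1) with hL
  have hodd : p % 2 = 1 := Nat.odd_iff.mp (hp.odd_of_ne_two hp2)
  have hsq : sqrtPstar p ^ 2 = (L : ℂ) * p := by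
    rw [hL, legendreSym.at_neg_one hp2]
    have h14 : p % 4 = 1 ∨ p % 4 = 3 := by omega
    have hsp : ((Real.sqrt p : ℂ)) ^ 2 = (p : ℂ) := by
      rw [← Complex.ofReal_pow, Real.sq_sqrt (by positivity)]
      norm_cast
    rcases h14 with h1 | h3
    · rw [ZMod.χ₄_nat_one_mod_four h1]
      simp only [sqrtPstar, if_pos h1, hsp]
      norm_num
    · rw [ZMod.χ₄_nat_three_mod_four h3]
      have hne : p % 4 ≠ 1 := by omega
      simp only [sqrtPstar, if_neg hne]
      rw [mul_pow, hsp, Complex.I_sq]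
      push_cast; ring
  have hps : (sqrtPstar p) ^ m = ((L ^ (j + 1) * (p : ℤ) ^ (j + 1) : ℤ) : ℂ) := by
    rw [show m = 2 * (j + 1) by omega, pow_mul, hsq]
    push_cast [mul_pow]
    ring
  set N : ZMod p → ℤ := fun a => ((Finset.univ.filter fun x : F => f x = a).card : ℤ) with hN
  set Cc : ℤ := ε * L ^ (j + 1) * (p : ℤ) ^ (j + 1) with hCc
  have hfib : ∑ a : ZMod p, (N a : ℂ) * zp p ^ a.val = (Cc : ℂ) := by
    rw [show ((Cc : ℤ) : ℂ) = (ε : ℂ) * ((L ^ (j + 1) * (p : ℤ) ^ (j + 1) : ℤ) : ℂ) by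
        push_cast [hCc]; ring,
      ← hps, ← hsum,
      ← Finset.sum_fiberwise (Finset.univ : Finset F) f (fun x => zp p ^ (f x).val)]
    apply Finset.sum_congr rfl
    intro a _
    rw [Finset.sum_congr rfl (fun x hx => by
      rw [(Finset.mem_filter.mp hx).2]), Finset.sum_const, nsmul_eq_mul]
    push_cast [hN]
    norm_cast
  set e : ZMod p → ℤ := fun a => N a - if a = 0 then Cc else 0 with he
  have hite : ∀ R : Type, ∀ _ : AddCommMonoid R, ∀ c : R,
      True := fun _ _ _ => trivial
  have hiteZ : (∑ a : ZMod p, if a = 0 then Cc else 0) = Cc := by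
    rw [Finset.sum_eq_single (0 : ZMod p)] <;> simp +contextual
  have h0 : ∑ a : ZMod p, (e a : ℂ) * zp p ^ a.val = 0 := by
    have hsplit : ∑ a : ZMod p, (e a : ℂ) * zp p ^ a.val
        = (∑ a : ZMod p, (N a : ℂ) * zp p ^ a.val)
          - ∑ a : ZMod p, (if a = 0 then (Cc : ℂ) else 0) * zp p ^ a.val := by
      rw [← Finset.sum_sub_distrib]
      apply Finset.sum_congr rfl
      intro a _
      simp only [he]
      push_cast
      split <;> ring
    rw [hsplit, hfib]
    have h1 : ∑ a : ZMod p, (if a = 0 then (Cc : ℂ) else 0) * zp p ^ a.val = (Cc : ℂ) := by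
      rw [Finset.sum_eq_single (0 : ZMod p)]
      · simp [ZMod.val_zero]
      · intro a _ ha; simp [ha]
      · simp
    rw [h1, sub_self]
  have hconst := key p e h0
  have hone : (1 : ZMod p) ≠ 0 := one_ne_zero
  have hNa : ∀ a : ZMod p, a ≠ 0 → N a = N 1 := by
    intro a ha
    have h := hconst a 1
    simpa only [he, if_neg ha, if_neg hone, sub_zero] using h
  have hN0 : N 0 = N 1 + Cc := by
    have h := hconst 0 1
    simp [he, hone] at h
    linarith
  have htot : ∑ a : ZMod p, N a = (p : ℤ) ^ m := by
    have h := Finset.card_eq_sum_card_fiberwise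
      (f := f) (s := Finset.univ) (t := Finset.univ) (fun x _ => Finset.mem_univ _)
    rw [Finset.card_univ, hcard] at h
    simp only [hN]
    exact_mod_cast h.symm
  have he1 : e 1 = N 1 := by simp [he, hone]
  have hsum_e : ∑ a : ZMod p, e a = (p : ℤ) * N 1 := by
    rw [Finset.sum_congr rfl (fun a _ => hconst a 1), Finset.sum_const, Finset.card_univ,
      ZMod.card, nsmul_eq_mul, he1]
  have hNe : (p : ℤ) * N 1 + Cc = ∑ a : ZMod p, N a := by
    rw [← hsum_e]
    have hsplit : ∑ a : ZMod p, e a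
        = (∑ a : ZMod p, N a) - ∑ a : ZMod p, (if a = 0 then Cc else 0) := by
      simp only [he]; rw [Finset.sum_sub_distrib]
    rw [hsplit, hiteZ]
    ring
  have hpt : (p : ℤ) * N 1 + Cc = (p : ℤ) ^ m := by rw [hNe, htot]
  have htval : N 1 = (p : ℤ) ^ (2 * j + 1) - ε * L ^ (j + 1) * (p : ℤ) ^ j := by
    have hpne : (p : ℤ) ≠ 0 := by exact_mod_cast hp.ne_zero
    apply mul_left_cancel₀ hpne
    have hptm : (p : ℤ) * N 1 = (p : ℤ) ^ m - Cc := by linarith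
    rw [hptm, hCc, hj]
    ring
  have hm1 : m - 1 = 2 * j + 1 := by omega
  have hm2 : m / 2 = j + 1 := by omega
  have hm22 : (m - 2) / 2 = j := by omega
  constructor
  · show N 0 = _
    rw [hN0, htval, hCc, hm1, hm2, hm22]
    ring
  · intro a ha
    show N a = _
    rw [hNa a ha, htval, hm1, hm2, hm22]
end

section
/- Let p be an odd prime and f a weakly regular bent function on 𝔽_q (q = p^m) with Walsh transform W_f(β) = ε √(p*)^m ζ_p^{f*(β)} for all β, where ε ∈ {1,-1}. Then the dual f* satisfies W_{f*}(-x) = (-1/p)^m ε √(p*)^m ζ_p^{f(x)} for all x ∈ 𝔽_q. -/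
open Complex

theorem stmt_8 (p m : ℕ) [Fact p.Prime] (hp2 : p ≠ 2) (hm : 0 < m)
    (F : Type) [Field F] [Fintype F] [Algebra (ZMod p) F]
    (hcard : Fintype.card F = p ^ m)
    (f fstar : F → ZMod p) (ε : ℤ) (hε : ε = 1 ∨ ε = -1)
    (hW : ∀ β : F, ∑ x : F, zp p ^ (f x + Algebra.trace (ZMod p) F (β * x)).val
      = (ε : ℂ) * sqrtPstar p ^ m * zp p ^ (fstar β).val) :
    ∀ x : F, ∑ y : F, zp p ^ (fstar y + Algebra.trace (ZMod p) F ((-x) * y)).val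
      = (legendreSym p (-1) : ℂ) ^ m * (ε : ℂ) * sqrtPstar p ^ m * zp p ^ (f x).val := by
  intro x
  classical
  have hp : p.Prime := Fact.out
  have hp0 : p ≠ 0 := hp.ne_zero
  haveI : NeZero p := ⟨hp0⟩
  have hodd : p % 2 = 1 := Nat.odd_iff.mp (hp.odd_of_ne_two hp2)
  -- ζ is a primitive p-th root of unity
  have hprim : IsPrimitiveRoot (zp p) p := Complex.isPrimitiveRoot_exp p hp0
  have hζ : zp p ^ p = 1 := hprim.pow_eq_one
  -- the additive character on ZMod p
  set χ : AddChar (ZMod p) ℂ := AddChar.zmodChar p hζ with hχdef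
  have hχ : ∀ a : ZMod p, χ a = zp p ^ a.val := fun a => rfl
  have hχprim : χ.IsPrimitive := AddChar.zmodChar_primitive_of_primitive_root p hprim
  -- the composed character on F
  set ψ : AddChar F ℂ :=
    χ.compAddMonoidHom (Algebra.trace (ZMod p) F).toAddMonoidHom with hψdef
  have hψ : ∀ a : F, ψ a = zp p ^ (Algebra.trace (ZMod p) F a).val := fun a => rfl
  -- ψ is primitive
  have hchar : ringChar F = p := by
    have : CharP F p := charP_of_injective_algebraMap' (ZMod p) (A := F) p
    exact ringChar.eq F p
  have hψprim : ψ.IsPrimitive := by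
    apply AddChar.IsPrimitive.of_ne_one
    obtain ⟨b, hb⟩ : ∃ b : F, Algebra.trace (ZMod p) F ((1 : F) * b) ≠ 0 := by
      subst hchar
      exact FiniteField.trace_to_zmod_nondegenerate F (one_ne_zero (α := F))
    rw [one_mul] at hb
    apply AddChar.ne_one_iff.2
    refine ⟨b, fun hf => hb ?_⟩
    exact (hχprim.zmod_char_eq_one_iff p (Algebra.trace (ZMod p) F b)).mp hf
  -- orthogonality
  have horth : ∀ b : F, ∑ y : F, ψ (b * y) = if b = 0 then ((p : ℂ) ^ m) else 0 := by
    intro b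
    have h := AddChar.sum_mulShift (ψ := ψ) b hψprim
    simp_rw [mul_comm] at h
    rw [h, hcard]
    push_cast
    rfl
  -- character of a sum splits
  have hsplit : ∀ a b : ZMod p, zp p ^ (a + b).val = zp p ^ a.val * zp p ^ b.val := by
    intro a b
    rw [← hχ, ← hχ, ← hχ, AddChar.map_add_eq_mul]
  -- constants
  set S : ℂ := sqrtPstar p with hS
  set L : ℤ := legendreSym p (-1) with hL
  have hSsq : S ^ 2 = (L : ℂ) * p := by
    have hppos : (0:ℝ) ≤ p := Nat.cast_nonneg p
    have hsq : ((Real.sqrt p : ℂ)) ^ 2 = (p : ℂ) := by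
      rw [← Complex.ofReal_pow, Real.sq_sqrt hppos]; norm_cast
    rw [hL, legendreSym.at_neg_one hp2, hS, sqrtPstar]
    have h4 : p % 4 = 1 ∨ p % 4 = 3 := by omega
    rcases h4 with h4 | h4
    · rw [if_pos h4, ZMod.χ₄_nat_one_mod_four h4, hsq]; push_cast; ring
    · rw [if_neg (by omega), ZMod.χ₄_nat_three_mod_four h4]
      push_cast
      rw [mul_pow, hsq, Complex.I_sq]
      ring
  have hL2 : (L : ℂ) ^ 2 = 1 := by
    have hne : ((-1 : ℤ) : ZMod p) ≠ 0 := by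
      simp only [Int.cast_neg, Int.cast_one]
      exact neg_ne_zero.mpr one_ne_zero
    have := legendreSym.sq_one (p := p) hne
    rw [hL]
    exact_mod_cast congrArg (Int.cast : ℤ → ℂ) this
  have hε2 : (ε : ℂ) ^ 2 = 1 := by rcases hε with h | h <;> simp [h]
  have hS0 : S ≠ 0 := by
    intro h
    have h2 : S ^ 2 = 0 := by rw [h]; ring
    rw [hSsq] at h2
    rcases mul_eq_zero.mp h2 with h3 | h3
    · have : (L : ℂ) ^ 2 = 0 := by rw [sq, h3, mul_zero]
      rw [hL2] at this; exact one_ne_zero this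
    · exact Nat.cast_ne_zero.mpr hp0 h3
  have hε0 : (ε : ℂ) ≠ 0 := by rcases hε with h | h <;> simp [h]
  have hC0 : (ε : ℂ) * S ^ m ≠ 0 := mul_ne_zero hε0 (pow_ne_zero m hS0)
  -- invert the Walsh transform
  have key : ∀ y : F, zp p ^ (fstar y).val
      = ((ε : ℂ) * S ^ m)⁻¹ * ∑ z : F, zp p ^ (f z).val * ψ (y * z) := by
    intro y
    have h := hW y
    simp_rw [hsplit, ← hψ] at h
    rw [h, inv_mul_cancel_left₀ hC0]
  -- main computation
  calc ∑ y : F, zp p ^ (fstar y + Algebra.trace (ZMod p) F ((-x) * y)).val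
      = ∑ y : F, zp p ^ (fstar y).val * ψ ((-x) * y) := by
        simp_rw [hsplit, ← hψ]
    _ = ∑ y : F, (((ε : ℂ) * S ^ m)⁻¹ * ∑ z : F, zp p ^ (f z).val * ψ (y * z)) * ψ ((-x) * y) := by
        simp_rw [key]
    _ = ((ε : ℂ) * S ^ m)⁻¹ * ∑ z : F, zp p ^ (f z).val * ∑ y : F, ψ ((z - x) * y) := by
        have hterm : ∀ z y : F, ψ (y * z) * ψ ((-x) * y) = ψ ((z - x) * y) := by
          intro z y; rw [← AddChar.map_add_eq_mul]; congr 1; ring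
        simp_rw [Finset.mul_sum, Finset.sum_mul]
        rw [Finset.sum_comm]
        refine Finset.sum_congr rfl fun z _ => Finset.sum_congr rfl fun y _ => ?_
        rw [mul_assoc, mul_assoc, hterm z y]
    _ = ((ε : ℂ) * S ^ m)⁻¹ * ((p : ℂ) ^ m * zp p ^ (f x).val) := by
        congr 1
        rw [Finset.sum_eq_single x]
        · rw [horth, if_pos (sub_self x)]; ring
        · intro z _ hz
          rw [horth, if_neg (sub_ne_zero_of_ne hz), mul_zero]
        · intro h; exact absurd (Finset.mem_univ x) h
    _ = (L : ℂ) ^ m * (ε : ℂ) * S ^ m * zp p ^ (f x).val := by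
        rw [inv_mul_eq_iff_eq_mul₀ hC0]
        have hpow : (p : ℂ) ^ m = (L : ℂ) ^ m * S ^ (2 * m) := by
          have h1 : (S ^ 2) ^ m = ((L : ℂ) * p) ^ m := by rw [hSsq]
          rw [← pow_mul] at h1
          rw [mul_pow] at h1
          have h2 : (L : ℂ) ^ m * S ^ (2 * m) = (L : ℂ) ^ m * ((L : ℂ) ^ m * (p:ℂ) ^ m) := by
            rw [h1]
          rw [h2, ← mul_assoc, ← pow_add]
          have : (L : ℂ) ^ (m + m) = ((L : ℂ) ^ 2) ^ m := by rw [← pow_mul]; ring_nf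
          rw [this, hL2, one_pow, one_mul]
        rw [hpow, two_mul, pow_add]
        have hee : (ε : ℂ) * (ε : ℂ) = 1 := by rw [← sq, hε2]
        linear_combination (-((L : ℂ) ^ m * S ^ m * S ^ m * zp p ^ (f x).val)) * hee
end

section
/- Let f be a weakly regular bent function in the class RF (f(0)=0 and there exists h with gcd(h-1,p-1)=1 and f(ax)=a^h f(x) for all a ∈ 𝔽_p^×). Then the dual f* satisfies f*(0) = 0. -/
open Complex Polynomial

noncomputable def chi (p : ℕ) (j : ZMod p) : ℂ := zp p ^ j.val

section lemmas
variable {p : ℕ} [Fact p.Prime]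

lemma zp_prim : IsPrimitiveRoot (zp p) p := by
  have := Complex.isPrimitiveRoot_exp p (Nat.Prime.ne_zero (Fact.out))
  simpa [zp, mul_comm, mul_div_assoc] using this

lemma zp_pow_p : zp p ^ p = 1 := zp_prim.pow_eq_one

lemma zp_pow_mod (a : ℕ) : zp p ^ (a % p) = zp p ^ a := by
  conv_rhs => rw [← Nat.mod_add_div a p, pow_add, pow_mul, zp_pow_p, one_pow, mul_one]

lemma chi_add (i j : ZMod p) : chi p (i + j) = chi p i * chi p j := by
  have : NeZero p := ⟨Nat.Prime.ne_zero Fact.out⟩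
  rw [chi, chi, chi, ZMod.val_add, zp_pow_mod, pow_add]

lemma chi_zero : chi p 0 = 1 := by
  have : NeZero p := ⟨Nat.Prime.ne_zero Fact.out⟩
  simp [chi, ZMod.val_zero]

lemma chi_inj {i j : ZMod p} (hij : chi p i = chi p j) : i = j := by
  have : NeZero p := ⟨Nat.Prime.ne_zero Fact.out⟩
  have := (zp_prim (p := p)).pow_inj (ZMod.val_lt i) (ZMod.val_lt j) hij
  exact ZMod.val_injective p this

lemma chi_sum : ∑ j : ZMod p, chi p j = 0 := by
  have : NeZero p := ⟨Nat.Prime.ne_zero Fact.out⟩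
  have h1 : chi p 1 ≠ 1 := by
    have hp1 : 1 < p := (Fact.out : p.Prime).one_lt
    intro h
    have := chi_inj (i := (1 : ZMod p)) (j := 0) (by rw [h, chi_zero])
    exact one_ne_zero this
  have key : (chi p 1 - 1) * ∑ j : ZMod p, chi p j = 0 := by
    rw [sub_mul, one_mul, Finset.mul_sum]
    have : ∑ j : ZMod p, chi p 1 * chi p j = ∑ j : ZMod p, chi p j := by
      rw [← Fintype.sum_equiv (Equiv.addLeft (1 : ZMod p)) _ (fun j => chi p j)]
      intro j; rw [← chi_add]; rfl
    rw [this, sub_self]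
  rcases mul_eq_zero.1 key with h | h
  · exact absurd (by linear_combination h) h1
  · exact h

lemma chi_natCast (i : ℕ) : chi p (i : ZMod p) = zp p ^ i := by
  have : NeZero p := ⟨Nat.Prime.ne_zero Fact.out⟩
  rw [chi, ZMod.val_natCast, zp_pow_mod]

lemma sum_zmod_eq_range (G : ZMod p → ℂ) :
    ∑ j : ZMod p, G j = ∑ i ∈ Finset.range p, G (i : ZMod p) := by
  have : NeZero p := ⟨Nat.Prime.ne_zero Fact.out⟩
  apply Finset.sum_nbij' (fun j : ZMod p => j.val) (fun i => (i : ZMod p))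
  · intro a _; exact Finset.mem_range.2 (ZMod.val_lt a)
  · intro a _; exact Finset.mem_univ _
  · intro a _; exact ZMod.natCast_rightInverse a
  · intro a ha; exact ZMod.val_cast_of_lt (Finset.mem_range.1 ha)
  · intro a _; rw [ZMod.natCast_rightInverse a]

lemma sum_const_eq (D : ZMod p → ℤ) (hD : ∑ j : ZMod p, (D j : ℂ) * chi p j = 0)
    (i j : ZMod p) : D i = D j := by
  have : NeZero p := ⟨Nat.Prime.ne_zero Fact.out⟩
  have hp2 : 2 ≤ p := (Fact.out : p.Prime).two_le
  set ζ := zp p with hζ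
  have h1 : ∑ i ∈ Finset.range p, (D (i : ZMod p) : ℂ) * ζ ^ i = 0 := by
    rw [← hD, sum_zmod_eq_range (fun j => (D j : ℂ) * chi p j)]
    exact Finset.sum_congr rfl (fun i _ => by rw [chi_natCast])
  have hgeom : ∑ i ∈ Finset.range p, ζ ^ i = 0 := by
    have hne1 : ζ ≠ 1 := by
      intro h
      have h10 : (1 : ℕ) = 0 := (zp_prim (p := p)).pow_inj (show 1 < p by omega)
        (show 0 < p by omega) (by simpa using h)
      exact one_ne_zero h10
    have := geom_sum_eq hne1 p
    rw [this, zp_pow_p, sub_self, zero_div]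
  set c : ℕ → ℚ := fun i => ((D (i : ZMod p) : ℚ) - (D ((p-1 : ℕ) : ZMod p) : ℚ)) with hc
  have h2 : ∑ i ∈ Finset.range p, (c i : ℂ) * ζ ^ i = 0 := by
    have : ∑ i ∈ Finset.range p, (c i : ℂ) * ζ ^ i
        = (∑ i ∈ Finset.range p, (D (i : ZMod p) : ℂ) * ζ ^ i)
          - (D ((p-1 : ℕ) : ZMod p) : ℂ) * ∑ i ∈ Finset.range p, ζ ^ i := by
      rw [Finset.mul_sum, ← Finset.sum_sub_distrib]
      apply Finset.sum_congr rfl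
      intro i _; push_cast [hc]; ring
    rw [this, h1, hgeom, mul_zero, sub_zero]
  have hcp : c (p-1) = 0 := by simp [hc]
  have h3 : ∑ i ∈ Finset.range (p-1), (c i : ℂ) * ζ ^ i = 0 := by
    have hsplit : p = (p-1) + 1 := by omega
    rw [hsplit, Finset.sum_range_succ, hcp] at h2
    simpa using h2
  set P : ℚ[X] := ∑ i ∈ Finset.range (p-1), C (c i) * X ^ i with hP
  have haeval : aeval ζ P = 0 := by
    rw [hP, map_sum]
    rw [← h3]
    apply Finset.sum_congr rfl
    intro i _
    rw [map_mul, map_pow, aeval_C, aeval_X]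
    rfl
  have hPzero : P = 0 := by
    by_contra hne
    have hdvd : minpoly ℚ ζ ∣ P := minpoly.dvd ℚ ζ haeval
    have hdeg : (minpoly ℚ ζ).natDegree ≤ P.natDegree :=
      Polynomial.natDegree_le_of_dvd hdvd hne
    have hmp : minpoly ℚ ζ = cyclotomic p ℚ :=
      (cyclotomic_eq_minpoly_rat (zp_prim (p := p)) (by omega)).symm
    have hdeg2 : (minpoly ℚ ζ).natDegree = p - 1 := by
      rw [hmp, natDegree_cyclotomic, Nat.totient_prime (Fact.out : p.Prime)]
    have hdegP : P.natDegree ≤ p - 2 := by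
      rw [hP]
      apply Polynomial.natDegree_sum_le_of_forall_le
      intro i hi
      calc (C (c i) * X ^ i).natDegree ≤ i := by
            rcases eq_or_ne (c i) 0 with hz | hz
            · simp [hz]
            · rw [natDegree_C_mul hz, natDegree_X_pow]
        _ ≤ p - 2 := by have := Finset.mem_range.1 hi; omega
    omega
  have hcoeff : ∀ k < p - 1, c k = 0 := by
    intro k hk
    have : P.coeff k = c k := by
      rw [hP, finset_sum_coeff]
      rw [Finset.sum_eq_single k]
      · simp
      · intro b _ hb; rw [coeff_C_mul, coeff_X_pow, if_neg (fun hh => hb hh.symm), mul_zero]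
      · intro hbk; exact absurd (Finset.mem_range.2 hk) hbk
    rw [hPzero] at this; simpa using this.symm
  have hall : ∀ n < p, D ((n : ℕ) : ZMod p) = D ((p-1 : ℕ) : ZMod p) := by
    intro n hn
    rcases lt_or_ge n (p-1) with hlt | hge
    · have := hcoeff n hlt
      rw [hc] at this
      have := sub_eq_zero.1 this
      exact_mod_cast this
    · have : n = p - 1 := by omega
      rw [this]
  have key : ∀ j : ZMod p, D j = D ((p-1 : ℕ) : ZMod p) := by
    intro j
    have := hall j.val (ZMod.val_lt j)
    rwa [ZMod.natCast_rightInverse j] at this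
  rw [key i, key j]

lemma rel_exists (N M : ZMod p → ℤ)
    (hyp : ∑ j : ZMod p, (N j : ℂ) * chi p j = ∑ j : ZMod p, (M j : ℂ) * chi p j) :
    ∃ k : ℤ, ∀ j, N j = M j + k := by
  refine ⟨N 0 - M 0, fun j => ?_⟩
  have hD : ∑ j : ZMod p, ((N j - M j : ℤ) : ℂ) * chi p j = 0 := by
    push_cast
    have : ∑ x : ZMod p, ((N x : ℂ) - (M x : ℂ)) * chi p x
        = ∑ x : ZMod p, (N x : ℂ) * chi p x - ∑ x : ZMod p, (M x : ℂ) * chi p x := by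
      rw [← Finset.sum_sub_distrib]
      exact Finset.sum_congr rfl (fun i _ => by ring)
    rw [this, hyp, sub_self]
  have := sum_const_eq (fun j => N j - M j) hD j 0
  omega

lemma chi_mul_sum {c : ZMod p} (hc : c ≠ 0) : ∑ j : ZMod p, chi p (c * j) = 0 := by
  rw [← chi_sum (p := p)]
  apply Fintype.sum_bijective (fun j : ZMod p => c * j)
  · constructor
    · intro a b hab; exact mul_left_cancel₀ hc hab
    · intro b; exact ⟨c⁻¹ * b, by field_simp⟩
  · intro j; rfl

lemma twist_eq (N M : ZMod p → ℤ)
    (hyp : ∑ j : ZMod p, (N j : ℂ) * chi p j = ∑ j : ZMod p, (M j : ℂ) * chi p j)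
    {c : ZMod p} (hc : c ≠ 0) :
    ∑ j : ZMod p, (N j : ℂ) * chi p (c * j) = ∑ j : ZMod p, (M j : ℂ) * chi p (c * j) := by
  obtain ⟨k, hk⟩ := rel_exists N M hyp
  have : ∀ j : ZMod p, (N j : ℂ) = (M j : ℂ) + (k : ℂ) := by
    intro j; exact_mod_cast congrArg (Int.cast : ℤ → ℂ) (hk j)
  calc ∑ j : ZMod p, (N j : ℂ) * chi p (c * j)
      = ∑ j : ZMod p, ((M j : ℂ) * chi p (c * j) + (k : ℂ) * chi p (c * j)) := by
        apply Finset.sum_congr rfl; intro j _; rw [this j]; ring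
    _ = ∑ j : ZMod p, (M j : ℂ) * chi p (c * j) + (k : ℂ) * ∑ j : ZMod p, chi p (c * j) := by
        rw [Finset.sum_add_distrib, Finset.mul_sum]
    _ = ∑ j : ZMod p, (M j : ℂ) * chi p (c * j) := by rw [chi_mul_sum hc, mul_zero, add_zero]

lemma fiberwise {X : Type} [Fintype X] [DecidableEq (ZMod p)] (u : X → ZMod p)
    (G : ZMod p → ℂ) :
    ∑ x : X, G (u x)
      = ∑ j : ZMod p, ((Finset.univ.filter (fun x => u x = j)).card : ℂ) * G j := by
  classical
  rw [← Finset.sum_fiberwise Finset.univ u (fun x => G (u x))]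
  apply Finset.sum_congr rfl
  intro j _
  have : ∑ x ∈ Finset.univ.filter (fun x => u x = j), G (u x)
      = ∑ _x ∈ Finset.univ.filter (fun x => u x = j), G j :=
    Finset.sum_congr rfl (fun x hx => by rw [(Finset.mem_filter.1 hx).2])
  rw [this, Finset.sum_const, nsmul_eq_mul]

lemma neg_one_ne_zero' : (-1 : ZMod p) ≠ 0 := by
  have hp : p.Prime := Fact.out
  have h1 := hp.one_lt
  have : Nontrivial (ZMod p) := ZMod.nontrivial_iff.2 (by omega)
  simp

lemma mul_reindex {s : ZMod p} (hs : s ≠ 0) (G : ZMod p → ℂ) :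
    ∑ t : ZMod p, G (s * t) = ∑ u : ZMod p, G u := by
  apply Fintype.sum_bijective (fun t : ZMod p => s * t)
  · constructor
    · intro a b hab; exact mul_left_cancel₀ hs hab
    · intro b; exact ⟨s⁻¹ * b, by field_simp⟩
  · intro t; rfl

lemma sum_sq_of_square {a : ZMod p} {s : ZMod p} (hs : s ≠ 0) (ha : a = s * s) :
    ∑ t : ZMod p, chi p (a * (t * t)) = ∑ t : ZMod p, chi p (t * t) := by
  have := mul_reindex hs (fun u => chi p (u * u))
  rw [← this]
  apply Finset.sum_congr rfl
  intro t _
  congr 1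
  rw [ha]; ring

lemma sum_sq_of_negsquare {a : ZMod p} {s : ZMod p} (hs : s ≠ 0) (ha : a = -(s * s)) :
    ∑ t : ZMod p, chi p (a * (t * t)) = ∑ u : ZMod p, chi p (-(u * u)) := by
  have := mul_reindex hs (fun u => chi p (-(u * u)))
  rw [← this]
  apply Finset.sum_congr rfl
  intro t _
  congr 1
  rw [ha]; ring

lemma chi_sum_prod : ∀ (n : ℕ) (v : Fin n → ZMod p),
    chi p (∑ i, v i) = ∏ i, chi p (v i) := by
  intro n
  induction n with
  | zero => intro v; simp [chi_zero]
  | succ n ih =>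
    intro v
    rw [Fin.sum_univ_succ, Fin.prod_univ_succ, chi_add, ih (fun i => v i.succ)]
end lemmas

section odd
variable {p : ℕ} [Fact p.Prime] (hp2 : p ≠ 2)
include hp2

lemma sqrtPstar_sq : (sqrtPstar p) ^ 2 = ((-1 : ℂ)) ^ ((p - 1) / 2) * p := by
  have hp : p.Prime := Fact.out
  have hodd : p % 2 = 1 := Nat.odd_iff.1 (hp.odd_of_ne_two hp2)
  have hsq : ((Real.sqrt p : ℂ)) ^ 2 = (p : ℂ) := by
    rw [← Complex.ofReal_pow, Real.sq_sqrt (Nat.cast_nonneg p)]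
    norm_cast
  rcases Nat.even_or_odd ((p - 1) / 2) with he | ho
  · have he' := Nat.even_iff.1 he
    have h4 : p % 4 = 1 := by omega
    rw [sqrtPstar, if_pos h4, hsq, Even.neg_one_pow he, one_mul]
  · have ho' := Nat.odd_iff.1 ho
    have h4 : p % 4 = 3 := by omega
    rw [sqrtPstar, if_neg (by omega), mul_pow, hsq, Complex.I_sq, Odd.neg_one_pow ho]
    ring

omit hp2 in
lemma sqrtPstar_ne_zero : sqrtPstar p ≠ 0 := by
  have hp : p.Prime := Fact.out
  have hpos : (0:ℝ) < Real.sqrt p := Real.sqrt_pos.2 (by exact_mod_cast hp.pos)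
  have : (Real.sqrt p : ℂ) ≠ 0 := by
    simp only [ne_eq, Complex.ofReal_eq_zero]
    exact hpos.ne'
  rw [sqrtPstar]
  split
  · exact this
  · exact mul_ne_zero this Complex.I_ne_zero

lemma g_mul_gneg :
    (∑ t : ZMod p, chi p (t * t)) * (∑ u : ZMod p, chi p (-(u * u))) = p := by
  have two_ne : (2 : ZMod p) ≠ 0 := by
    have hp : p.Prime := Fact.out
    intro h
    have : ((2 : ℕ) : ZMod p) = 0 := by exact_mod_cast h
    have := (ZMod.natCast_eq_zero_iff 2 p).1 this
    have h2 := Nat.le_of_dvd (by norm_num) this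
    have := hp.two_le
    omega
  rw [Finset.sum_mul_sum]
  have hA : ∑ z : ZMod p × ZMod p, chi p (z.1 * z.1) * chi p (-(z.2 * z.2))
      = ∑ t : ZMod p, ∑ u : ZMod p, chi p (t * t) * chi p (-(u * u)) :=
    Fintype.sum_prod_type (f := fun z : ZMod p × ZMod p => chi p (z.1 * z.1) * chi p (-(z.2 * z.2)))
  have step1 : ∑ t : ZMod p, ∑ u : ZMod p, chi p (t * t) * chi p (-(u * u))
      = ∑ z : ZMod p × ZMod p, chi p (z.1 * z.2) := by
    rw [← hA]
    let e : ZMod p × ZMod p ≃ ZMod p × ZMod p :=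
      { toFun := fun z => (z.1 + z.2, z.1 - z.2)
        invFun := fun w => ((w.1 + w.2) * 2⁻¹, (w.1 - w.2) * 2⁻¹)
        left_inv := by intro z; ext <;> field_simp <;> ring
        right_inv := by intro w; ext <;> field_simp <;> ring }
    apply Fintype.sum_equiv e
    intro z
    show chi p (z.1 * z.1) * chi p (-(z.2 * z.2)) = chi p ((z.1 + z.2) * (z.1 - z.2))
    rw [← chi_add]
    congr 1
    ring
  rw [step1, Fintype.sum_prod_type]
  rw [Finset.sum_eq_single_of_mem (0 : ZMod p) (Finset.mem_univ _)]
  · simp only [zero_mul]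
    rw [Finset.sum_const, chi_zero, Finset.card_univ, ZMod.card]
    simp
  · intro v _ hv
    exact chi_mul_sum hv

omit hp2 in
lemma gneg_eq_of_one (h4 : p % 4 = 1) :
    ∑ u : ZMod p, chi p (-(u * u)) = ∑ t : ZMod p, chi p (t * t) := by
  obtain ⟨r, hr⟩ : IsSquare (-1 : ZMod p) := ZMod.exists_sq_eq_neg_one_iff.2 (by omega)
  have hr0 : r ≠ 0 := by
    intro h; rw [h, mul_zero] at hr; exact neg_one_ne_zero' hr
  have h1 : ((-1 : ZMod p)) = r * r := hr
  have := sum_sq_of_negsquare (p := p) (a := 1) (s := r) hr0 (by rw [← h1]; ring)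
  rw [← this]
  apply Finset.sum_congr rfl
  intro t _; rw [one_mul]

omit hp2 in
lemma gneg_eq_of_three (h43 : p % 4 = 3) :
    ∑ u : ZMod p, chi p (-(u * u)) = - ∑ t : ZMod p, chi p (t * t) := by
  classical
  have hp : p.Prime := Fact.out
  set g := ∑ t : ZMod p, chi p (t * t) with hg
  set gneg := ∑ u : ZMod p, chi p (-(u * u)) with hgneg
  have hnosq : ¬ IsSquare (-1 : ZMod p) := by
    rw [ZMod.exists_sq_eq_neg_one_iff]; omega
  have hG0 : ∑ t : ZMod p, chi p ((0 : ZMod p) * (t * t)) = p := by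
    have he : ∀ t : ZMod p, chi p ((0 : ZMod p) * (t * t)) = 1 := by
      intro t; rw [zero_mul, chi_zero]
    rw [Finset.sum_congr rfl (fun t _ => he t), Finset.sum_const, Finset.card_univ,
      ZMod.card]; simp
  have htot : ∑ a : ZMod p, ∑ t : ZMod p, chi p (a * (t * t)) = p := by
    rw [Finset.sum_comm]
    rw [Finset.sum_eq_single_of_mem (0 : ZMod p) (Finset.mem_univ _)]
    · have he : ∀ a : ZMod p, chi p (a * ((0:ZMod p) * 0)) = 1 := by
        intro a; rw [mul_zero, mul_zero, chi_zero]
      rw [Finset.sum_congr rfl (fun a _ => he a), Finset.sum_const, Finset.card_univ,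
        ZMod.card]; simp
    · intro t _ ht
      have he : ∀ a : ZMod p, chi p (a * (t * t)) = chi p ((t * t) * a) := fun a => by
        rw [mul_comm]
      rw [Finset.sum_congr rfl (fun a _ => he a)]
      exact chi_mul_sum (mul_ne_zero ht ht)
  have herase : ∑ a ∈ Finset.univ.erase (0 : ZMod p), ∑ t : ZMod p, chi p (a * (t * t)) = 0 := by
    have hsplit : (∑ t : ZMod p, chi p ((0 : ZMod p) * (t * t)))
        + ∑ a ∈ Finset.univ.erase (0 : ZMod p), ∑ t : ZMod p, chi p (a * (t * t))
        = ∑ a : ZMod p, ∑ t : ZMod p, chi p (a * (t * t)) :=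
      Finset.add_sum_erase Finset.univ
        (fun a : ZMod p => ∑ t : ZMod p, chi p (a * (t * t))) (Finset.mem_univ 0)
    rw [htot, hG0] at hsplit
    linear_combination hsplit
  set S := Finset.univ.erase (0 : ZMod p) with hS
  have hval : ∀ a ∈ S, (∑ t : ZMod p, chi p (a * (t * t)))
      = if IsSquare a then g else gneg := by
    intro a haS
    have ha0 : a ≠ 0 := (Finset.mem_erase.1 haS).1
    by_cases hsq : IsSquare a
    · rw [if_pos hsq]
      obtain ⟨s, hs⟩ := hsq
      have hs0 : s ≠ 0 := by intro h; rw [h, mul_zero] at hs; exact ha0 hs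
      exact sum_sq_of_square hs0 hs
    · rw [if_neg hsq]
      have hna : a ≠ 0 := ha0
      have hquad : IsSquare (-a) := by
        have hζa : quadraticChar (ZMod p) a = -1 :=
          (quadraticChar_neg_one_iff_not_isSquare).2 hsq
        have hζm1 : quadraticChar (ZMod p) (-1) = -1 :=
          (quadraticChar_neg_one_iff_not_isSquare).2 hnosq
        have hmul : quadraticChar (ZMod p) (-a) = 1 := by
          rw [show (-a : ZMod p) = (-1) * a by ring, map_mul, hζa, hζm1]; norm_num
        exact (quadraticChar_one_iff_isSquare (neg_ne_zero.2 hna)).1 hmul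
      obtain ⟨s, hs⟩ := hquad
      have hs0 : s ≠ 0 := by
        intro h; rw [h, mul_zero] at hs
        exact hna (by rw [← neg_neg a, hs, neg_zero])
      exact sum_sq_of_negsquare hs0 (by rw [← hs]; ring)
  rw [Finset.sum_congr rfl hval] at herase
  rw [Finset.sum_ite] at herase
  have hcard : (S.filter (fun a => IsSquare a)).card = (S.filter (fun a => ¬ IsSquare a)).card := by
    apply Finset.card_bij (fun a _ => -a)
    · intro a ha
      obtain ⟨haS, hasq⟩ := Finset.mem_filter.1 ha
      have ha0 : a ≠ 0 := (Finset.mem_erase.1 haS).1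
      refine Finset.mem_filter.2 ⟨Finset.mem_erase.2 ⟨neg_ne_zero.2 ha0, Finset.mem_univ _⟩, ?_⟩
      intro hcontra
      obtain ⟨t, ht⟩ := hcontra
      obtain ⟨s, hs⟩ := hasq
      have hs0 : s ≠ 0 := by intro h; rw [h, mul_zero] at hs; exact ha0 hs
      apply hnosq
      refine ⟨t * s⁻¹, ?_⟩
      have htt : t * t = -(s * s) := by rw [← ht, hs]
      have hss : (s * s) ≠ 0 := mul_ne_zero hs0 hs0
      have hcalc : (t * s⁻¹) * (t * s⁻¹) = (t * t) * (s * s)⁻¹ := by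
        rw [mul_inv]; ring
      rw [hcalc, htt, neg_mul, mul_inv_cancel₀ hss]
    · intro a ha b hb hab
      exact neg_injective hab
    · intro b hb
      obtain ⟨hbS, hbns⟩ := Finset.mem_filter.1 hb
      have hb0 : b ≠ 0 := (Finset.mem_erase.1 hbS).1
      have hsq : IsSquare (-b) := by
        have hζb : quadraticChar (ZMod p) b = -1 :=
          (quadraticChar_neg_one_iff_not_isSquare).2 hbns
        have hζm1 : quadraticChar (ZMod p) (-1) = -1 :=
          (quadraticChar_neg_one_iff_not_isSquare).2 hnosq
        have hmul : quadraticChar (ZMod p) (-b) = 1 := by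
          rw [show (-b : ZMod p) = (-1) * b by ring, map_mul, hζb, hζm1]; norm_num
        exact (quadraticChar_one_iff_isSquare (neg_ne_zero.2 hb0)).1 hmul
      refine ⟨-b, Finset.mem_filter.2 ⟨Finset.mem_erase.2 ⟨neg_ne_zero.2 hb0, Finset.mem_univ _⟩,
        hsq⟩, by rw [neg_neg]⟩
  rw [Finset.sum_const, Finset.sum_const, hcard] at herase
  have hpos : 0 < (S.filter (fun a => ¬ IsSquare a)).card := by
    rw [← hcard]
    apply Finset.card_pos.2
    refine ⟨1, Finset.mem_filter.2 ⟨Finset.mem_erase.2 ⟨one_ne_zero, Finset.mem_univ _⟩,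
      IsSquare.one⟩⟩
  have hfactor : ((S.filter (fun a => ¬ IsSquare a)).card : ℂ) * (g + gneg) = 0 := by
    rw [mul_add]
    rw [nsmul_eq_mul, nsmul_eq_mul] at herase
    linear_combination herase
  have hcne : ((S.filter (fun a => ¬ IsSquare a)).card : ℂ) ≠ 0 :=
    Nat.cast_ne_zero.2 hpos.ne'
  have := (mul_eq_zero.1 hfactor).resolve_left hcne
  linear_combination this

lemma g_sq : (∑ t : ZMod p, chi p (t * t)) ^ 2 = ((-1 : ℂ)) ^ ((p - 1) / 2) * p := by
  have hp : p.Prime := Fact.out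
  have hodd : p % 2 = 1 := Nat.odd_iff.1 (hp.odd_of_ne_two hp2)
  by_cases h4 : p % 4 = 1
  · have he : Even ((p-1)/2) := Nat.even_iff.2 (by omega)
    rw [Even.neg_one_pow he, one_mul, sq]
    conv_lhs => rw [show (∑ t : ZMod p, chi p (t * t)) * (∑ t : ZMod p, chi p (t * t))
      = (∑ t : ZMod p, chi p (t * t)) * (∑ u : ZMod p, chi p (-(u * u))) by
        rw [gneg_eq_of_one h4]]
    exact g_mul_gneg hp2
  · have h43 : p % 4 = 3 := by omega
    have ho : Odd ((p-1)/2) := Nat.odd_iff.2 (by omega)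
    rw [Odd.neg_one_pow ho, neg_one_mul]
    have h1 := g_mul_gneg (p := p) hp2
    rw [gneg_eq_of_three h43] at h1
    linear_combination -h1
end odd

section field
variable {p : ℕ} [Fact p.Prime] {F : Type} [Field F] [Fintype F] [Algebra (ZMod p) F]

lemma orbit_div (s : Finset F) (h0 : (0:F) ∉ s)
    (hinv : ∀ (a : (ZMod p)ˣ) (x : F), x ∈ s →
      algebraMap (ZMod p) F (a : ZMod p) * x ∈ s) :
    (p - 1) ∣ s.card := by
  classical
  revert h0 hinv
  induction s using Finset.strongInduction with
  | _ s ih =>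
    intro h0 hinv
    rcases Finset.eq_empty_or_nonempty s with rfl | ⟨x, hx⟩
    · simp
    · have hx0 : x ≠ 0 := fun h => h0 (h ▸ hx)
      set O : Finset F :=
        Finset.image (fun a : (ZMod p)ˣ => algebraMap (ZMod p) F (a : ZMod p) * x)
          Finset.univ with hO
      have hinj : Function.Injective
          (fun a : (ZMod p)ˣ => algebraMap (ZMod p) F (a : ZMod p) * x) := by
        intro a b hab
        simp only at hab
        have := mul_right_cancel₀ hx0 hab
        exact Units.ext ((algebraMap (ZMod p) F).injective this)
      have hcardO : O.card = p - 1 := by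
        rw [hO, Finset.card_image_of_injective _ hinj, Finset.card_univ,
          ZMod.card_units_eq_totient, Nat.totient_prime Fact.out]
      have hOsub : O ⊆ s := by
        intro y hy
        obtain ⟨a, _, rfl⟩ := Finset.mem_image.1 hy
        exact hinv a x hx
      have hxO : x ∈ O :=
        Finset.mem_image.2 ⟨1, Finset.mem_univ _, by simp⟩
      have hssub : s \ O ⊂ s := by
        apply Finset.sdiff_ssubset hOsub
        exact ⟨x, hxO⟩
      have h0' : (0:F) ∉ s \ O := fun h => h0 (Finset.mem_sdiff.1 h).1
      have hinv' : ∀ (a : (ZMod p)ˣ) (y : F), y ∈ s \ O →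
          algebraMap (ZMod p) F (a : ZMod p) * y ∈ s \ O := by
        intro a y hy
        obtain ⟨hys, hyO⟩ := Finset.mem_sdiff.1 hy
        refine Finset.mem_sdiff.2 ⟨hinv a y hys, ?_⟩
        intro hmem
        apply hyO
        obtain ⟨b, _, hb⟩ := Finset.mem_image.1 hmem
        refine Finset.mem_image.2 ⟨a⁻¹ * b, Finset.mem_univ _, ?_⟩
        show algebraMap (ZMod p) F ((a⁻¹ * b : (ZMod p)ˣ) : ZMod p) * x = y
        have hco : ((a⁻¹ * b : (ZMod p)ˣ) : ZMod p) = ((a⁻¹ : (ZMod p)ˣ) : ZMod p) * (b : ZMod p) :=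
          rfl
        rw [hco, map_mul, mul_assoc, hb, ← mul_assoc, ← map_mul]
        have : ((a⁻¹ : (ZMod p)ˣ) : ZMod p) * (a : ZMod p) = 1 := by
          rw [← Units.val_mul, inv_mul_cancel, Units.val_one]
        rw [this, map_one, one_mul]
      have hcard : (s \ O).card + O.card = s.card :=
        Finset.card_sdiff_add_card_eq_card hOsub
      obtain ⟨k, hk⟩ := ih (s \ O) hssub h0' hinv'
      exact ⟨k + 1, by rw [← hcard, hk, hcardO]; ring⟩

lemma trace_orth {x : F} (hx : x ≠ 0) :
    ∑ β : F, chi p (Algebra.trace (ZMod p) F (β * x)) = 0 := by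
  classical
  have : Module.Finite (ZMod p) F := Module.Finite.of_finite
  have hsurj := Algebra.trace_surjective (ZMod p) F
  set u : F → ZMod p := fun β => Algebra.trace (ZMod p) F (β * x) with hu
  have husurj : Function.Surjective u := by
    intro c
    obtain ⟨y, hy⟩ := hsurj c
    exact ⟨y * x⁻¹, by rw [hu]; simp only; rw [mul_assoc, inv_mul_cancel₀ hx, mul_one, hy]⟩
  have husub : ∀ β γ : F, u (β - γ) = u β - u γ := by
    intro β γ
    rw [hu]; simp only
    rw [sub_mul, map_sub]
  have hfib : ∀ j : ZMod p, (Finset.univ.filter (fun β => u β = j)).card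
      = (Finset.univ.filter (fun β : F => u β = 0)).card := by
    intro j
    obtain ⟨βj, hβj⟩ := husurj j
    apply Finset.card_bij (fun β _ => β - βj)
    · intro β hβ
      have := (Finset.mem_filter.1 hβ).2
      refine Finset.mem_filter.2 ⟨Finset.mem_univ _, ?_⟩
      rw [husub, this, hβj, sub_self]
    · intro a _ b _ hab
      exact sub_left_injective hab
    · intro γ hγ
      have hγ0 := (Finset.mem_filter.1 hγ).2
      refine ⟨γ + βj, Finset.mem_filter.2 ⟨Finset.mem_univ _, ?_⟩, by ring⟩
      have : u (γ + βj) - u βj = u γ := by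
        rw [← husub]; congr 1; ring
      rw [← sub_add_cancel (u (γ + βj)) (u βj), this, hγ0, hβj, zero_add]
  rw [fiberwise u (chi p)]
  have : ∀ j : ZMod p, ((Finset.univ.filter (fun β => u β = j)).card : ℂ) * chi p j
      = ((Finset.univ.filter (fun β : F => u β = 0)).card : ℂ) * chi p j := by
    intro j; rw [hfib j]
  rw [Finset.sum_congr rfl (fun j _ => this j), ← Finset.mul_sum, chi_sum, mul_zero]
end field

-- extra helpers to append before main theorem
section extra
variable {p : ℕ} [Fact p.Prime]

lemma two_nz (hp2 : p ≠ 2) : (2 : ZMod p) ≠ 0 := by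
  have hp : p.Prime := Fact.out
  intro h
  have : ((2 : ℕ) : ZMod p) = 0 := by exact_mod_cast h
  have := (ZMod.natCast_eq_zero_iff 2 p).1 this
  have h2 := Nat.le_of_dvd (by norm_num) this
  have := hp.two_le
  omega

variable {F : Type} [Field F] [Fintype F] [Algebra (ZMod p) F]

lemma mul_reindexF {s : F} (hs : s ≠ 0) (G : F → ℂ) :
    ∑ x : F, G (s * x) = ∑ y : F, G y := by
  apply Fintype.sum_bijective (fun x : F => s * x)
  · constructor
    · intro a b hab; exact mul_left_cancel₀ hs hab
    · intro b; exact ⟨s⁻¹ * b, by field_simp⟩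
  · intro t; rfl

lemma algebraMap_unit_ne_zero (a : (ZMod p)ˣ) :
    algebraMap (ZMod p) F (a : ZMod p) ≠ 0 := by
  intro hcon
  have : (a : ZMod p) = 0 := by
    apply (algebraMap (ZMod p) F).injective
    rw [hcon, map_zero]
  exact a.ne_zero this

lemma algebraMap_inv_mul (b : (ZMod p)ˣ) :
    algebraMap (ZMod p) F (b : ZMod p) * algebraMap (ZMod p) F ((b⁻¹ : (ZMod p)ˣ) : ZMod p)
      = 1 := by
  rw [← map_mul, ← Units.val_mul, mul_inv_cancel, Units.val_one, map_one]

end extra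


theorem stmt_9 (p m : ℕ) [Fact p.Prime] (hp2 : p ≠ 2) (hm : 0 < m)
    (F : Type) [Field F] [Fintype F] [Algebra (ZMod p) F]
    (hcard : Fintype.card F = p ^ m)
    (f fstar : F → ZMod p) (ε : ℤ) (hε : ε = 1 ∨ ε = -1)
    (hW : ∀ β : F, ∑ x : F, zp p ^ (f x + Algebra.trace (ZMod p) F (β * x)).val
      = (ε : ℂ) * sqrtPstar p ^ m * zp p ^ (fstar β).val)
    (hf0 : f 0 = 0) (h : ℕ) (hh : Nat.gcd (h - 1) (p - 1) = 1)
    (hhom : ∀ (a : (ZMod p)ˣ) (x : F),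
      f (algebraMap (ZMod p) F (a : ZMod p) * x) = (a : ZMod p) ^ h * f x) :
    fstar 0 = 0 := by
  classical
  have hp : p.Prime := Fact.out
  have hNZ : NeZero p := ⟨hp.ne_zero⟩
  have hp3 : 3 ≤ p := by
    have := hp.two_le
    rcases Nat.lt_or_ge p 3 with h3 | h3
    · interval_cases p
      · exact absurd rfl hp2
    · exact h3
  have hpodd : p % 2 = 1 := Nat.odd_iff.1 (hp.odd_of_ne_two hp2)
  set c0 : ZMod p := fstar 0 with hc0def
  have hW' : ∀ β : F, ∑ x : F, chi p (f x + Algebra.trace (ZMod p) F (β * x))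
      = (ε : ℂ) * sqrtPstar p ^ m * chi p (fstar β) := hW
  have hεne : (ε : ℂ) ≠ 0 := by rcases hε with hh1 | hh1 <;> simp [hh1]
  have hε2 : (ε : ℂ) * (ε : ℂ) = 1 := by rcases hε with hh1 | hh1 <;> norm_num [hh1]
  have hfac_ne : (ε : ℂ) * sqrtPstar p ^ m ≠ 0 :=
    mul_ne_zero hεne (pow_ne_zero _ sqrtPstar_ne_zero)
  have hS : ∑ x : F, chi p (f x) = (ε : ℂ) * sqrtPstar p ^ m * chi p c0 := by
    have h0 := hW' 0
    have : ∀ x : F, chi p (f x + Algebra.trace (ZMod p) F ((0:F) * x)) = chi p (f x) := by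
      intro x; rw [zero_mul, map_zero, add_zero]
    rwa [Finset.sum_congr rfl (fun x _ => this x)] at h0
  -- h is even and at least 2
  have hh1 : 1 ≤ h := by
    by_contra hcon
    have hzero : h = 0 := by omega
    rw [hzero] at hh
    simp only [Nat.zero_sub, Nat.gcd_zero_left] at hh
    omega
  have hheven : h % 2 = 0 := by
    have hnd : ¬ (2 ∣ (h - 1)) := by
      intro hd
      have h2p : 2 ∣ (p - 1) := by omega
      have := Nat.dvd_gcd hd h2p
      rw [hh] at this
      exact absurd (Nat.le_of_dvd one_pos this) (by norm_num)
    omega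
  by_cases hdeg : ∀ a : (ZMod p)ˣ, (a : ZMod p) ^ h = 1
  · -- ===== degenerate case =====
    -- scale invariance of f
    have hfi : ∀ (b : (ZMod p)ˣ) (x : F), f (algebraMap (ZMod p) F (b : ZMod p) * x) = f x := by
      intro b x; rw [hhom b x, hdeg b, one_mul]
    -- scale invariance of fstar
    have hfsi : ∀ (b : (ZMod p)ˣ) (β : F),
        fstar (algebraMap (ZMod p) F (b : ZMod p) * β) = fstar β := by
      intro b β
      set bb := algebraMap (ZMod p) F (b : ZMod p) with hbb
      set bi := algebraMap (ZMod p) F ((b⁻¹ : (ZMod p)ˣ) : ZMod p) with hbi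
      have hbbi : bb * bi = 1 := algebraMap_inv_mul b
      have hsum : ∑ x : F, chi p (f x + Algebra.trace (ZMod p) F (β * x))
          = ∑ x : F, chi p (f x + Algebra.trace (ZMod p) F ((bb * β) * x)) := by
        apply Fintype.sum_bijective (fun y : F => bi * y)
        · constructor
          · intro x y hxy
            exact mul_left_cancel₀ (algebraMap_unit_ne_zero b⁻¹) hxy
          · intro y
            refine ⟨bb * y, ?_⟩
            show bi * (bb * y) = y
            rw [← mul_assoc, mul_comm bi bb, hbbi, one_mul]
        · intro y
          show chi p (f y + Algebra.trace (ZMod p) F (β * y))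
            = chi p (f (bi * y) + Algebra.trace (ZMod p) F ((bb * β) * (bi * y)))
          have h1 : f (bi * y) = f y := hfi b⁻¹ y
          have h2 : (bb * β) * (bi * y) = β * y := by
            have hx : bb * β * (bi * y) = (bb * bi) * (β * y) := by ring
            rw [hx, hbbi, one_mul]
          rw [h1, h2]
      have h1 := hW' (bb * β)
      have h2 := hW' β
      rw [← hsum] at h1
      rw [h2] at h1
      exact (chi_inj (mul_left_cancel₀ hfac_ne h1)).symm
    -- (star): trace orthogonality sum
    have hT : (ε : ℂ) * sqrtPstar p ^ m * (∑ β : F, chi p (fstar β)) = (p : ℂ) ^ m := by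
      have hswap : ∑ β : F, ∑ x : F, chi p (f x + Algebra.trace (ZMod p) F (β * x))
          = (p : ℂ) ^ m := by
        rw [Finset.sum_comm]
        have hin : ∀ x : F, ∑ β : F, chi p (f x + Algebra.trace (ZMod p) F (β * x))
            = chi p (f x) * ∑ β : F, chi p (Algebra.trace (ZMod p) F (β * x)) := by
          intro x
          rw [Finset.mul_sum]
          exact Finset.sum_congr rfl (fun β _ => chi_add _ _)
        rw [Finset.sum_congr rfl (fun x _ => hin x)]
        rw [Finset.sum_eq_single_of_mem (0 : F) (Finset.mem_univ _)]
        · rw [hf0, chi_zero, one_mul]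
          have : ∀ β : F, chi p (Algebra.trace (ZMod p) F (β * 0)) = 1 := by
            intro β; rw [mul_zero, map_zero, chi_zero]
          rw [Finset.sum_congr rfl (fun β _ => this β), Finset.sum_const, Finset.card_univ,
            hcard]
          simp
        · intro x _ hx
          rw [trace_orth hx, mul_zero]
      have : ∑ β : F, ((ε : ℂ) * sqrtPstar p ^ m * chi p (fstar β)) = (p : ℂ) ^ m := by
        rw [← Finset.sum_congr rfl (fun β _ => hW' β)]
        exact hswap
      rw [← Finset.mul_sum] at this
      exact this
    -- key comparison S = sI * chi c0 * T
    set T := ∑ β : F, chi p (fstar β) with hTdef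
    set sI : ℤ := (-1) ^ ((p - 1) / 2 * m) with hsIdef
    have hsI : sI = 1 ∨ sI = -1 := by
      rcases Nat.even_or_odd ((p - 1) / 2 * m) with he | ho
      · left; rw [hsIdef, he.neg_one_pow]
      · right; rw [hsIdef, ho.neg_one_pow]
    have hsqm : (sqrtPstar p ^ m) * (sqrtPstar p ^ m) = (sI : ℂ) * (p : ℂ) ^ m := by
      have h1 : (sqrtPstar p ^ m) * (sqrtPstar p ^ m) = (sqrtPstar p ^ 2) ^ m := by ring
      rw [h1, sqrtPstar_sq hp2, mul_pow, ← pow_mul, hsIdef]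
      push_cast
      ring
    have hkey : ∑ x : F, chi p (f x) = (sI : ℂ) * chi p c0 * T := by
      apply mul_left_cancel₀ hfac_ne
      calc (ε : ℂ) * sqrtPstar p ^ m * (∑ x : F, chi p (f x))
          = (ε : ℂ) * sqrtPstar p ^ m * ((ε : ℂ) * sqrtPstar p ^ m * chi p c0) := by rw [hS]
        _ = ((ε:ℂ) * (ε:ℂ)) * ((sqrtPstar p ^ m) * (sqrtPstar p ^ m)) * chi p c0 := by ring
        _ = (sI : ℂ) * (p : ℂ) ^ m * chi p c0 := by rw [hε2, hsqm]; ring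
        _ = (sI : ℂ) * ((ε : ℂ) * sqrtPstar p ^ m * T) * chi p c0 := by rw [hT]
        _ = (ε : ℂ) * sqrtPstar p ^ m * ((sI : ℂ) * chi p c0 * T) := by ring
    -- counting
    set N1 : ZMod p → ℤ := fun j => ((Finset.univ.filter (fun x : F => f x = j)).card : ℤ)
      with hN1
    set N2 : ZMod p → ℤ :=
      fun j => ((Finset.univ.filter (fun β : F => fstar β + c0 = j)).card : ℤ) with hN2
    have hfib1 : ∑ x : F, chi p (f x) = ∑ j : ZMod p, (N1 j : ℂ) * chi p j := by
      rw [fiberwise f (chi p)]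
      apply Finset.sum_congr rfl
      intro j _; rw [hN1]; push_cast; ring
    have hfib2 : chi p c0 * T = ∑ j : ZMod p, (N2 j : ℂ) * chi p j := by
      have h1 : chi p c0 * T = ∑ β : F, chi p (fstar β + c0) := by
        rw [hTdef, Finset.mul_sum]
        apply Finset.sum_congr rfl
        intro β _
        rw [chi_add, mul_comm]
      rw [h1, fiberwise (fun β : F => fstar β + c0) (chi p)]
      apply Finset.sum_congr rfl
      intro j _; rw [hN2]; push_cast; ring
    have heq : ∑ j : ZMod p, (N1 j : ℂ) * chi p j
        = ∑ j : ZMod p, ((sI * N2 j : ℤ) : ℂ) * chi p j := by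
      rw [← hfib1, hkey, mul_assoc, hfib2, Finset.mul_sum]
      apply Finset.sum_congr rfl
      intro j _; push_cast; ring
    obtain ⟨k, hk⟩ := rel_exists N1 (fun j => sI * N2 j) heq
    -- total sums
    have hsum1 : ∑ j : ZMod p, N1 j = (p : ℤ) ^ m := by
      have hc := Finset.card_eq_sum_card_fiberwise
        (f := f) (s := Finset.univ) (t := Finset.univ) (fun x _ => Finset.mem_univ _)
      rw [Finset.card_univ, hcard] at hc
      rw [hN1]
      beta_reduce
      exact_mod_cast (show ∑ j : ZMod p, (Finset.univ.filter (fun x : F => f x = j)).card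
        = p ^ m by convert hc.symm)
    have hsum2 : ∑ j : ZMod p, N2 j = (p : ℤ) ^ m := by
      have hc := Finset.card_eq_sum_card_fiberwise
        (f := fun β : F => fstar β + c0) (s := Finset.univ) (t := Finset.univ)
        (fun x _ => Finset.mem_univ _)
      rw [Finset.card_univ, hcard] at hc
      rw [hN2]
      beta_reduce
      exact_mod_cast (show ∑ j : ZMod p,
        (Finset.univ.filter (fun β : F => fstar β + c0 = j)).card = p ^ m by convert hc.symm)
    have hksum : (p : ℤ) ^ m = sI * (p : ℤ) ^ m + (p : ℤ) * k := by
      have h1 : ∑ j : ZMod p, N1 j = ∑ j : ZMod p, (sI * N2 j + k) :=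
        Finset.sum_congr rfl (fun j _ => hk j)
      rw [Finset.sum_add_distrib, ← Finset.mul_sum, Finset.sum_const, Finset.card_univ,
        ZMod.card, hsum1, hsum2, nsmul_eq_mul] at h1
      exact_mod_cast h1
    -- assume c0 ≠ 0 and derive contradiction
    by_contra hc0
    have htwo : (2 : ZMod p) ≠ 0 := two_nz hp2
    have hc2 : c0 + c0 ≠ 0 := by
      intro hcc
      apply hc0
      have : (2 : ZMod p) * c0 = 0 := by linear_combination hcc
      rcases mul_eq_zero.1 this with hz | hz
      · exact absurd hz htwo
      · exact hz
    -- divisibility 1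
    have hdvd1 : ((p : ℤ) - 1) ∣ (N1 0 - 1) := by
      set s0 := Finset.univ.filter (fun x : F => f x = 0) with hs0
      have h0mem : (0 : F) ∈ s0 := Finset.mem_filter.2 ⟨Finset.mem_univ _, hf0⟩
      have herase : (s0.erase 0).card = s0.card - 1 := Finset.card_erase_of_mem h0mem
      have hpos : 1 ≤ s0.card := Finset.card_pos.2 ⟨0, h0mem⟩
      have hdnat : (p - 1) ∣ (s0.erase 0).card := by
        apply orbit_div
        · exact Finset.notMem_erase 0 s0
        · intro a x hx
          obtain ⟨hx0, hxs⟩ := Finset.mem_erase.1 hx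
          refine Finset.mem_erase.2 ⟨mul_ne_zero (algebraMap_unit_ne_zero a) hx0, ?_⟩
          refine Finset.mem_filter.2 ⟨Finset.mem_univ _, ?_⟩
          rw [hfi a x]
          exact (Finset.mem_filter.1 hxs).2
      obtain ⟨t, ht⟩ := hdnat
      refine ⟨(t : ℤ), ?_⟩
      have hN10 : N1 0 = (s0.card : ℤ) := by rw [hN1]
      rw [hN10]
      have : ((s0.erase 0).card : ℤ) = (s0.card : ℤ) - 1 := by
        rw [herase]; push_cast [Nat.cast_sub hpos]; ring
      have h2 : ((s0.erase 0).card : ℤ) = ((p : ℤ) - 1) * (t : ℤ) := by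
        rw [ht]; push_cast [Nat.cast_sub hp.one_le]; ring
      omega
    -- divisibility 2
    have hdvd2 : ((p : ℤ) - 1) ∣ N2 0 := by
      set s1 := Finset.univ.filter (fun β : F => fstar β + c0 = 0) with hs1
      have h0not : (0 : F) ∉ s1 := by
        intro hmem
        have := (Finset.mem_filter.1 hmem).2
        rw [← hc0def] at this
        exact hc2 this
      have hdnat : (p - 1) ∣ s1.card := by
        apply orbit_div
        · exact h0not
        · intro a β hβ
          refine Finset.mem_filter.2 ⟨Finset.mem_univ _, ?_⟩
          rw [hfsi a β]
          exact (Finset.mem_filter.1 hβ).2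
      obtain ⟨t, ht⟩ := hdnat
      refine ⟨(t : ℤ), ?_⟩
      have : N2 0 = (s1.card : ℤ) := by rw [hN2]
      rw [this, ht]
      push_cast [Nat.cast_sub hp.one_le]
      ring
    -- final contradiction
    set q : ℤ := (p : ℤ) with hq
    have hq3 : 3 ≤ q := by rw [hq]; exact_mod_cast hp3
    have hpowdvd : (q - 1) ∣ (q ^ m - 1) := by
      simpa using sub_dvd_pow_sub_pow q 1 m
    have d2 : (q - 1) ∣ (k - 1) := by
      have hexpr : k - 1 = (N1 0 - 1) - sI * N2 0 := by
        have := hk 0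
        omega
      rw [hexpr]
      exact dvd_sub hdvd1 (Dvd.dvd.mul_left hdvd2 sI)
    have d3 : (q - 1) ∣ (1 - sI - k) := by
      have h0 : q ^ m - sI * q ^ m - q * k = 0 := by linarith [hksum]
      have hexpr : (1 - sI - k)
          = -((q ^ m - 1) - sI * (q ^ m - 1) - (q - 1) * k) + (q ^ m - sI * q ^ m - q * k) := by
        ring
      rw [hexpr, h0, add_zero]
      apply dvd_neg.2
      exact dvd_sub (dvd_sub hpowdvd (Dvd.dvd.mul_left hpowdvd sI)) (Dvd.dvd.mul_right dvd_rfl k)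
    have d4 : (q - 1) ∣ sI := by
      have := dvd_add d3 d2
      have hring : (1 - sI - k) + (k - 1) = -sI := by ring
      rw [hring] at this
      exact (dvd_neg.1 this)
    have : q - 1 ≤ 1 := by
      rcases hsI with hz | hz
      · exact Int.le_of_dvd one_pos (hz ▸ d4)
      · have : (q - 1) ∣ 1 := by
          have := dvd_neg.2 d4
          rw [hz] at this
          simpa using this
        exact Int.le_of_dvd one_pos this
    omega

  · -- ===== nondegenerate case =====
    push_neg at hdeg
    obtain ⟨a, hcu⟩ := hdeg
    set c : ZMod p := (a : ZMod p) ^ h with hcdef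
    have hcne : c ≠ 0 := pow_ne_zero _ a.ne_zero
    set b : ZMod p := (a : ZMod p) ^ (h / 2) with hbdef
    have hbne : b ≠ 0 := pow_ne_zero _ a.ne_zero
    have hcb : c = b * b := by
      rw [hcdef, hbdef, ← pow_add]
      congr 1
      omega
    set g := ∑ t : ZMod p, chi p (t * t) with hgdef
    have hgsq := g_sq (p := p) hp2
    have hps := sqrtPstar_sq (p := p) hp2
    have hdelta : sqrtPstar p = g ∨ sqrtPstar p = -g := by
      have hzero : (sqrtPstar p - g) * (sqrtPstar p + g) = 0 := by
        have : sqrtPstar p ^ 2 = g ^ 2 := by rw [hps, ← hgsq]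
        linear_combination this
      rcases mul_eq_zero.1 hzero with hz | hz
      · left; linear_combination hz
      · right; linear_combination hz
    obtain ⟨dI, hdI, hdpow⟩ : ∃ dI : ℤ, (dI = 1 ∨ dI = -1) ∧
        sqrtPstar p ^ m = (dI : ℂ) * g ^ m := by
      rcases hdelta with hz | hz
      · exact ⟨1, Or.inl rfl, by rw [hz]; push_cast; ring⟩
      · rcases Nat.even_or_odd m with he | ho
        · exact ⟨1, Or.inl rfl, by rw [hz, he.neg_pow]; push_cast; ring⟩
        · exact ⟨-1, Or.inr rfl, by rw [hz, ho.neg_pow]; push_cast; ring⟩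
    -- expansion of g^m (with arbitrary multiplier w ≠ 0)
    have hexpand : ∀ w : ZMod p,
        (∑ j : ZMod p, chi p (w * (j * j))) ^ m
          = ∑ t : Fin m → ZMod p, chi p (w * ∑ i, t i * t i) := by
      intro w
      calc (∑ j : ZMod p, chi p (w * (j * j))) ^ m
          = ∏ _i : Fin m, ∑ j : ZMod p, chi p (w * (j * j)) := by
            rw [Finset.prod_const, Finset.card_univ, Fintype.card_fin]
        _ = ∑ t ∈ Fintype.piFinset (fun _ : Fin m => Finset.univ),
              ∏ i : Fin m, chi p (w * (t i * t i)) := Finset.prod_univ_sum _ _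
        _ = ∑ t : Fin m → ZMod p, ∏ i : Fin m, chi p (w * (t i * t i)) := by
            rw [Fintype.piFinset_univ]
        _ = ∑ t : Fin m → ZMod p, chi p (w * ∑ i, t i * t i) := by
            apply Finset.sum_congr rfl
            intro t _
            rw [Finset.mul_sum, chi_sum_prod]
    have hone : ∑ j : ZMod p, chi p ((1 : ZMod p) * (j * j)) = g := by
      rw [hgdef]
      apply Finset.sum_congr rfl
      intro j _; rw [one_mul]
    have hgm : g ^ m = ∑ t : Fin m → ZMod p, chi p ((1:ZMod p) * ∑ i, t i * t i) := by
      rw [← hexpand 1, hone]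
    -- counting functions
    set u2 : (Fin m → ZMod p) → ZMod p := fun t => (1 : ZMod p) * (∑ i, t i * t i) + c0
      with hu2
    set N1 : ZMod p → ℤ := fun j => ((Finset.univ.filter (fun x : F => f x = j)).card : ℤ)
      with hN1
    set N2 : ZMod p → ℤ :=
      fun j => ((Finset.univ.filter (fun t : Fin m → ZMod p => u2 t = j)).card : ℤ) with hN2
    have hfib1 : ∑ x : F, chi p (f x) = ∑ j : ZMod p, (N1 j : ℂ) * chi p j := by
      rw [fiberwise f (chi p)]
      apply Finset.sum_congr rfl
      intro j _; rw [hN1]; push_cast; ring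
    have hfib2 : ∑ t : Fin m → ZMod p, chi p (u2 t)
        = ∑ j : ZMod p, (N2 j : ℂ) * chi p j := by
      rw [fiberwise u2 (chi p)]
      apply Finset.sum_congr rfl
      intro j _; rw [hN2]; push_cast; ring
    have hSexp : (ε : ℂ) * sqrtPstar p ^ m * chi p c0
        = ((ε * dI : ℤ) : ℂ) * ∑ t : Fin m → ZMod p, chi p (u2 t) := by
      have : ∑ t : Fin m → ZMod p, chi p (u2 t)
          = (∑ t : Fin m → ZMod p, chi p ((1:ZMod p) * ∑ i, t i * t i)) * chi p c0 := by
        rw [Finset.sum_mul]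
        apply Finset.sum_congr rfl
        intro t _
        rw [hu2]; exact chi_add _ _
      rw [this, ← hgm, hdpow]
      push_cast
      ring
    have heq : ∑ j : ZMod p, (N1 j : ℂ) * chi p j
        = ∑ j : ZMod p, (((ε * dI) * N2 j : ℤ) : ℂ) * chi p j := by
      rw [← hfib1, hS, hSexp, hfib2, Finset.mul_sum]
      apply Finset.sum_congr rfl
      intro j _; push_cast; ring
    have htwist := twist_eq N1 (fun j => (ε * dI) * N2 j) heq hcne
    -- identify the twisted left side
    have hL : ∑ j : ZMod p, (N1 j : ℂ) * chi p (c * j) = ∑ x : F, chi p (c * f x) := by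
      rw [fiberwise f (fun j => chi p (c * j))]
      apply Finset.sum_congr rfl
      intro j _; rw [hN1]; push_cast; ring
    have hLval : ∑ x : F, chi p (c * f x) = (ε : ℂ) * sqrtPstar p ^ m * chi p c0 := by
      have h1 : ∀ x : F, chi p (c * f x)
          = chi p (f (algebraMap (ZMod p) F (a : ZMod p) * x)) := by
        intro x; rw [hhom a x, hcdef]
      rw [Finset.sum_congr rfl (fun x _ => h1 x)]
      rw [mul_reindexF (algebraMap_unit_ne_zero a) (fun y => chi p (f y))]
      exact hS
    -- identify the twisted right side
    have hR : ∑ j : ZMod p, (((ε * dI) * N2 j : ℤ) : ℂ) * chi p (c * j)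
        = ((ε * dI : ℤ) : ℂ) * ∑ t : Fin m → ZMod p, chi p (c * u2 t) := by
      rw [fiberwise u2 (fun j => chi p (c * j)), Finset.mul_sum]
      apply Finset.sum_congr rfl
      intro j _; rw [hN2]; push_cast; ring
    have hRval : ((ε * dI : ℤ) : ℂ) * ∑ t : Fin m → ZMod p, chi p (c * u2 t)
        = (ε : ℂ) * sqrtPstar p ^ m * chi p (c * c0) := by
      have h1 : ∀ t : Fin m → ZMod p, chi p (c * u2 t)
          = chi p (c * ∑ i, t i * t i) * chi p (c * c0) := by
        intro t
        rw [hu2, ← chi_add]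
        congr 1
        ring
      rw [Finset.sum_congr rfl (fun t _ => h1 t), ← Finset.sum_mul]
      have h2 : ∑ t : Fin m → ZMod p, chi p (c * ∑ i, t i * t i) = g ^ m := by
        rw [← hexpand c, sum_sq_of_square hbne hcb]
      rw [h2, hdpow]
      push_cast
      ring
    have hfinal : (ε : ℂ) * sqrtPstar p ^ m * chi p c0
        = (ε : ℂ) * sqrtPstar p ^ m * chi p (c * c0) := by
      rw [← hLval, ← hL, htwist, hR, hRval]
    have hcc : c0 = c * c0 := chi_inj (mul_left_cancel₀ hfac_ne hfinal)
    have hzero : (c - 1) * c0 = 0 := by linear_combination -hcc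
    rcases mul_eq_zero.1 hzero with hz | hz
    · exact absurd (by linear_combination hz : c = 1) hcu
    · exact hz
end

section
/- Let f ∈ RF be a weakly regular bent function with dual f*. If f(ax) = a^h f(x) for all a ∈ 𝔽_p^× with gcd(h-1,p-1)=1, and l satisfies l(h-1) ≡ 1 (mod p-1), then f*(aβ) = a^{l+1} f*(β) for all a ∈ 𝔽_p^× and β ∈ 𝔽_q, and gcd((l+1)-1, p-1) = 1. Consequently f* ∈ RF. -/
open Complex

set_option maxHeartbeats 2000000 in
theorem stmt_10 (p m : ℕ) [Fact p.Prime] (hp2 : p ≠ 2) (hm : 0 < m)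
    (F : Type) [Field F] [Fintype F] [Algebra (ZMod p) F]
    (hcard : Fintype.card F = p ^ m)
    (f fstar : F → ZMod p) (ε : ℤ) (hε : ε = 1 ∨ ε = -1)
    (hW : ∀ β : F, ∑ x : F, zp p ^ (f x + Algebra.trace (ZMod p) F (β * x)).val
      = (ε : ℂ) * sqrtPstar p ^ m * zp p ^ (fstar β).val)
    (hf0 : f 0 = 0) (h : ℕ) (hh : Nat.gcd (h - 1) (p - 1) = 1)
    (hhom : ∀ (a : (ZMod p)ˣ) (x : F),
      f (algebraMap (ZMod p) F (a : ZMod p) * x) = (a : ZMod p) ^ h * f x)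
    (l : ℕ) (hl : l * (h - 1) ≡ 1 [MOD p - 1]) :
    (∀ (a : (ZMod p)ˣ) (β : F),
      fstar (algebraMap (ZMod p) F (a : ZMod p) * β) = (a : ZMod p) ^ (l + 1) * fstar β)
    ∧ Nat.gcd ((l + 1) - 1) (p - 1) = 1 := by
  have hp : p.Prime := Fact.out
  have hp0 : p ≠ 0 := hp.ne_zero
  have hppos : 0 < p := hp.pos
  have hp3 : 3 ≤ p := by
    have := hp.two_le
    omega
  -- second component
  have hgcd : Nat.gcd ((l + 1) - 1) (p - 1) = 1 := by
    simp only [Nat.add_sub_cancel]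
    have hco : Nat.Coprime (p - 1) (l * (h - 1)) := by
      unfold Nat.Coprime
      rw [Nat.gcd_rec]
      have h1 : l * (h - 1) % (p - 1) = 1 % (p - 1) := hl
      rw [h1, Nat.one_mod_eq_one.mpr (by omega)]
      simp
    have := (Nat.Coprime.coprime_dvd_right (dvd_mul_right l (h - 1)) hco).symm
    exact this
  -- h ≥ 1
  have hh1 : 1 ≤ h := by
    rcases Nat.eq_zero_or_pos h with h0 | h1
    · subst h0
      simp at hh
      omega
    · exact h1
  -- primitive root setup
  have hζ : IsPrimitiveRoot (zp p) p := Complex.isPrimitiveRoot_exp p hp0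
  set ζ : ℂ := zp p with hζdef
  have hord : orderOf ζ = p := hζ.eq_orderOf.symm
  have hζp : ζ ^ p = 1 := hζ.pow_eq_one
  have hζne : ζ ≠ 0 := hζ.ne_zero hp0
  -- G
  set G : ℂ := (ε : ℂ) * sqrtPstar p ^ m with hGdef
  have hsne : sqrtPstar p ≠ 0 := by
    have hr : Real.sqrt p ≠ 0 := ne_of_gt (Real.sqrt_pos.mpr (by exact_mod_cast hppos))
    unfold sqrtPstar
    split_ifs
    · exact_mod_cast Complex.ofReal_ne_zero.mpr hr
    · exact mul_ne_zero (Complex.ofReal_ne_zero.mpr hr) Complex.I_ne_zero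
  have hεne : (ε : ℂ) ≠ 0 := by rcases hε with rfl | rfl <;> norm_num
  have hGne : G ≠ 0 := mul_ne_zero hεne (pow_ne_zero _ hsne)
  set cq : ℚ := if p % 4 = 1 then (p : ℚ) else -(p : ℚ) with hcq
  have hGsq : G ^ 2 = algebraMap ℚ ℂ (cq ^ m) := by
    have hε2 : (ε : ℂ) ^ 2 = 1 := by rcases hε with rfl | rfl <;> norm_num
    have hs2 : sqrtPstar p ^ 2 = algebraMap ℚ ℂ cq := by
      rw [eq_ratCast]
      rw [hcq]
      unfold sqrtPstar
      split_ifs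
      · rw [← Complex.ofReal_pow, Real.sq_sqrt (by positivity)]
        push_cast
        ring
      · rw [mul_pow, Complex.I_sq, ← Complex.ofReal_pow, Real.sq_sqrt (by positivity)]
        push_cast
        ring
    calc G ^ 2 = (ε : ℂ) ^ 2 * (sqrtPstar p ^ 2) ^ m := by rw [hGdef]; ring
      _ = algebraMap ℚ ℂ (cq ^ m) := by
          rw [hε2, hs2, one_mul, map_pow]
  -- the cyclotomic subfield
  have hint : IsIntegral ℚ ζ := (hζ.isIntegral hppos).tower_top
  set K : IntermediateField ℚ ℂ := IntermediateField.adjoin ℚ {ζ} with hKdef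
  set ζK : K := IntermediateField.AdjoinSimple.gen ℚ ζ with hζKdef
  have hζKcoe : K.val ζK = ζ := rfl
  have hζKne : ζK ≠ 0 := by
    intro h0
    apply hζne
    rw [← hζKcoe, h0, map_zero]
  set pb : PowerBasis ℚ K := IntermediateField.adjoin.powerBasis hint with hpbdef
  refine ⟨fun a β => ?_, hgcd⟩
  set t : ZMod p := (a : ZMod p) ^ (l + 1) with htdef
  have htu : t = ((a ^ (l + 1) : (ZMod p)ˣ) : ZMod p) := (Units.val_pow_eq_pow_val a (l + 1)).symm
  set tv : ℕ := t.val with htvdef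
  have htco : Nat.Coprime tv p := by
    rw [htvdef, htu]
    exact ZMod.val_coe_unit_coprime _
  have hζt : IsPrimitiveRoot (ζ ^ tv) p := hζ.pow_of_coprime tv htco
  have hroot : (Polynomial.aeval (ζ ^ tv)) (minpoly ℚ pb.gen) = 0 := by
    rw [hpbdef, IntermediateField.adjoin.powerBasis_gen,
      show minpoly ℚ (IntermediateField.AdjoinSimple.gen ℚ ζ) = minpoly ℚ ζ from
        IntermediateField.minpoly_gen (F := ℚ) (α := ζ),
      ← Polynomial.cyclotomic_eq_minpoly_rat hζ hppos, Polynomial.aeval_def,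
      ← Polynomial.eval_map, Polynomial.map_cyclotomic]
    exact hζt.isRoot_cyclotomic hppos
  set φ : K →ₐ[ℚ] ℂ := pb.lift (ζ ^ tv) hroot with hφdef
  have hgen : pb.gen = ζK := IntermediateField.adjoin.powerBasis_gen hint
  have hφζ : φ ζK = ζ ^ tv := by
    rw [← hgen]
    exact pb.lift_gen (ζ ^ tv) hroot
  -- the exponent congruence
  have hmod : l * h ≡ l + 1 [MOD p - 1] := by
    have h1 : l * h = l * (h - 1) + l := by
      have h2 : h - 1 + 1 = h := Nat.succ_pred_eq_of_pos hh1
      calc l * h = l * (h - 1 + 1) := by rw [h2]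
        _ = l * (h - 1) + l := by ring
    rw [h1]
    have := hl.add_right l
    simpa [Nat.add_comm] using this
  have hunit : (a : (ZMod p)ˣ) ^ (l * h) = a ^ (l + 1) := by
    rw [pow_eq_pow_iff_modEq]
    have hdvd : orderOf a ∣ p - 1 := (ZMod.card_units p) ▸ orderOf_dvd_card
    exact hmod.of_dvd hdvd
  have hpowZ : (a : ZMod p) ^ (l * h) = t := by
    rw [htu, ← Units.val_pow_eq_pow_val, hunit]
  -- the substitution
  set A : ZMod p →+* F := algebraMap (ZMod p) F with hAdef
  set c : F := A ((a : ZMod p) ^ l) with hcdef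
  have hcne : c ≠ 0 := by
    have hne : ((a : ZMod p) ^ l) ≠ 0 := by
      rw [← Units.val_pow_eq_pow_val]
      exact Units.ne_zero _
    intro hc
    exact hne (A.injective (by rw [← hcdef, hc, map_zero]))
  have hkey : ∀ y : F,
      f (c * y) + Algebra.trace (ZMod p) F (A (a : ZMod p) * β * (c * y))
        = t * (f y + Algebra.trace (ZMod p) F (β * y)) := by
    intro y
    have h1 : f (c * y) = t * f y := by
      have h2 := hhom (a ^ l) y
      rw [Units.val_pow_eq_pow_val] at h2
      rw [hcdef, hAdef, h2, ← pow_mul, hpowZ]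
    have h2 : A (a : ZMod p) * β * (c * y) = A t * (β * y) := by
      rw [hcdef, htdef, map_pow, map_pow]
      ring
    rw [h1, h2, ← Algebra.smul_def, LinearMap.map_smul, smul_eq_mul, mul_add]
  have hsum1 : ∑ x : F, ζ ^ (f x + Algebra.trace (ZMod p) F (A (a : ZMod p) * β * x)).val
      = ∑ y : F, ζ ^ (t * (f y + Algebra.trace (ZMod p) F (β * y))).val := by
    rw [← Equiv.sum_comp (Equiv.mulLeft₀ c hcne)
      (fun x => ζ ^ (f x + Algebra.trace (ZMod p) F (A (a : ZMod p) * β * x)).val)]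
    refine Finset.sum_congr rfl fun y _ => ?_
    rw [show (Equiv.mulLeft₀ c hcne) y = c * y from rfl, hkey y]
  have hpow : ∀ s : ZMod p, ζ ^ (t * s).val = (ζ ^ s.val) ^ tv := by
    intro s
    have h2 : ζ ^ (tv * s.val % p) = ζ ^ (tv * s.val) := by
      have h3 := pow_mod_orderOf ζ (tv * s.val)
      rw [hord] at h3
      exact h3
    calc ζ ^ (t * s).val = ζ ^ (tv * s.val % p) := by rw [ZMod.val_mul]
      _ = ζ ^ (tv * s.val) := h2
      _ = (ζ ^ s.val) ^ tv := by rw [mul_comm, pow_mul]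
  set d : ℕ := (fstar β).val with hddef
  set d' : ℕ := (fstar (A (a : ZMod p) * β)).val with hd'def
  have hW2 : ∑ y : F, (ζ ^ (f y + Algebra.trace (ZMod p) F (β * y)).val) ^ tv
      = G * ζ ^ d' := by
    have hWa := hW (A (a : ZMod p) * β)
    calc ∑ y : F, (ζ ^ (f y + Algebra.trace (ZMod p) F (β * y)).val) ^ tv
        = ∑ y : F, ζ ^ (t * (f y + Algebra.trace (ZMod p) F (β * y))).val := by
          refine Finset.sum_congr rfl fun y _ => (hpow _).symm
      _ = ∑ x : F, ζ ^ (f x + Algebra.trace (ZMod p) F (A (a : ZMod p) * β * x)).val :=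
          hsum1.symm
      _ = G * ζ ^ d' := hWa
  set SK : K := ∑ y : F, ζK ^ (f y + Algebra.trace (ZMod p) F (β * y)).val with hSKdef
  have hSKc : K.val SK = G * ζ ^ d := by
    have h1 : K.val SK = ∑ y : F, ζ ^ (f y + Algebra.trace (ZMod p) F (β * y)).val := by
      rw [hSKdef, map_sum]
      refine Finset.sum_congr rfl fun y _ => ?_
      rw [map_pow, hζKcoe]
    rw [h1]
    exact hW β
  set GK : K := SK * (ζK ^ d)⁻¹ with hGKdef
  have hSKGK : SK = GK * ζK ^ d := by
    rw [hGKdef, inv_mul_cancel_right₀ (pow_ne_zero _ hζKne)]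
  have hGKcoe : K.val GK = G := by
    rw [hGKdef, map_mul, map_inv₀, map_pow, hζKcoe, hSKc,
      mul_inv_cancel_right₀ (pow_ne_zero _ hζne)]
  have hGK2 : GK ^ 2 = algebraMap ℚ K (cq ^ m) := by
    refine K.val.toRingHom.injective ?_
    show K.val (GK ^ 2) = K.val (algebraMap ℚ K (cq ^ m))
    rw [map_pow, hGKcoe, hGsq]
    exact (K.val.commutes _).symm
  have hφGKsq : (φ GK) ^ 2 = G ^ 2 := by
    rw [← map_pow, hGK2, AlgHom.commutes, hGsq]
  have hφcase : φ GK = G ∨ φ GK = -G := sq_eq_sq_iff_eq_or_eq_neg.mp hφGKsq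
  have hφSK1 : φ SK = G * ζ ^ d' := by
    have e1 : φ SK = ∑ y : F, (ζ ^ (f y + Algebra.trace (ZMod p) F (β * y)).val) ^ tv := by
      rw [hSKdef, map_sum]
      refine Finset.sum_congr rfl fun y _ => ?_
      rw [map_pow, hφζ, ← pow_mul, ← pow_mul, mul_comm]
    rw [e1]
    exact hW2
  have hφSK2 : φ SK = φ GK * ζ ^ (tv * d) := by
    rw [hSKGK, map_mul, map_pow, hφζ, ← pow_mul]
  have hmain : φ GK * ζ ^ (tv * d) = G * ζ ^ d' := by
    rw [← hφSK2, hφSK1]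
  rcases hφcase with hc1 | hc1
  · rw [hc1] at hmain
    have hzz : ζ ^ (tv * d) = ζ ^ d' := mul_left_cancel₀ hGne hmain
    have hmm : tv * d ≡ d' [MOD p] := by
      have e : ζ ^ (tv * d % p) = ζ ^ (d' % p) := by
        rw [← hord, pow_mod_orderOf, pow_mod_orderOf]
        exact hzz
      exact hζ.pow_inj (Nat.mod_lt _ hppos) (Nat.mod_lt _ hppos) e
    have hcast : ((d' : ℕ) : ZMod p) = ((tv * d : ℕ) : ZMod p) :=
      ((ZMod.natCast_eq_natCast_iff _ _ _).mpr hmm).symm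
    have h1 : ((d' : ℕ) : ZMod p) = fstar (A (a : ZMod p) * β) := by
      rw [hd'def, ZMod.natCast_val, ZMod.cast_id]
    have h2 : ((tv * d : ℕ) : ZMod p) = t * fstar β := by
      push_cast
      rw [htvdef, hddef, ZMod.natCast_val, ZMod.cast_id, ZMod.natCast_val, ZMod.cast_id]
    rw [← h1, hcast, h2]
  · exfalso
    rw [hc1] at hmain
    have heq : ζ ^ d' = -ζ ^ (tv * d) := by
      have : G * ζ ^ d' = -(G * ζ ^ (tv * d)) := by rw [← hmain]; ring
      have h3 := mul_left_cancel₀ hGne (by rw [this]; ring : G * ζ ^ d' = G * (-ζ ^ (tv * d)))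
      exact h3
    have hodd : Odd p := hp.odd_of_ne_two hp2
    have h1 : (ζ ^ d') ^ p = 1 := by
      rw [← pow_mul, mul_comm, pow_mul, hζp, one_pow]
    have h2 : (ζ ^ (tv * d)) ^ p = 1 := by
      rw [← pow_mul, mul_comm, pow_mul, hζp, one_pow]
    rw [heq, hodd.neg_pow, h2] at h1
    norm_num at h1
end
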